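/- arXiv:2306.07587 — 6 statements merged into one kernel-verified Lean document; each statement's English description precedes it below -/
import Mathlib

section
/- Let p be a real polynomial in n variables, homogeneous of degree d, hyperbolic in direction e ∈ ℝⁿ, and let L be a two-dimensional linear subspace of ℝⁿ that contains e. Then there exists a linear map M : L → ℝᵈ such that Me = (1,1,…,1) and for all x ∈ L, p(x) = p(e) · ∏_{i=1}^{d} (Mx)_i. -/
open scoped BigOperators

/-- The univariate polynomial `t ↦ p(t • e - x)` associated to a multivariate polynomial `p`,
a direction `e` and a point `x`. -/
noncomputable def hypCharPoly {n : ℕ} (p : MvPolynomial (Fin n) ℝ) (e x : Fin n → ℝ) :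
    Polynomial ℝ :=
  MvPolynomial.aeval (fun i => Polynomial.C (e i) * Polynomial.X - Polynomial.C (x i)) p

/-- `p` is a homogeneous polynomial of degree `d`, hyperbolic in direction `e`:
`p(e) ≠ 0` and for every `x` the polynomial `t ↦ p(t • e - x)` has `d` real roots
counted with multiplicity. -/
def IsHyperbolicPoly {n : ℕ} (p : MvPolynomial (Fin n) ℝ) (e : Fin n → ℝ) (d : ℕ) : Prop :=
  p.IsHomogeneous d ∧ MvPolynomial.eval e p ≠ 0 ∧
    ∀ x : Fin n → ℝ, Multiset.card (hypCharPoly p e x).roots = d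

/-- The (closed) hyperbolicity cone `Λ₊`: all hyperbolic eigenvalues are nonnegative. -/
def hypConeClosed {n : ℕ} (p : MvPolynomial (Fin n) ℝ) (e : Fin n → ℝ) : Set (Fin n → ℝ) :=
  {x | ∀ r ∈ (hypCharPoly p e x).roots, (0:ℝ) ≤ r}

/-- The open hyperbolicity cone `Λ₊₊`: all hyperbolic eigenvalues are positive. -/
def hypConeOpen {n : ℕ} (p : MvPolynomial (Fin n) ℝ) (e : Fin n → ℝ) : Set (Fin n → ℝ) :=
  {x | ∀ r ∈ (hypCharPoly p e x).roots, (0:ℝ) < r}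

/-- The gradient of `f(x) = -ln p(x)`, namely `g(x)ᵢ = -(∂ᵢ p)(x) / p(x)`. -/
noncomputable def gradNegLog {n : ℕ} (p : MvPolynomial (Fin n) ℝ) (x : Fin n → ℝ) :
    Fin n → ℝ :=
  fun i => -(MvPolynomial.eval x (MvPolynomial.pderiv i p)) / MvPolynomial.eval x p

/-- The Hessian of `f(x) = -ln p(x)`, namely
`H(x)ᵢⱼ = (∂ᵢp)(x)(∂ⱼp)(x)/p(x)² - (∂ᵢ∂ⱼp)(x)/p(x)`. -/
noncomputable def hessNegLog {n : ℕ} (p : MvPolynomial (Fin n) ℝ) (x : Fin n → ℝ) :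
    Matrix (Fin n) (Fin n) ℝ :=
  Matrix.of fun i j =>
    MvPolynomial.eval x (MvPolynomial.pderiv i p) * MvPolynomial.eval x (MvPolynomial.pderiv j p)
        / (MvPolynomial.eval x p) ^ 2
      - MvPolynomial.eval x (MvPolynomial.pderiv i (MvPolynomial.pderiv j p))
        / MvPolynomial.eval x p

/-- The local inner product `⟨u, v⟩_{e'} = uᵀ H(e') v`. -/
noncomputable def localIP {n : ℕ} (p : MvPolynomial (Fin n) ℝ) (e' u v : Fin n → ℝ) : ℝ :=
  ∑ i, ∑ j, u i * hessNegLog p e' i j * v j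

/-- The local norm `‖v‖_{e'} = ⟨v, v⟩_{e'}^{1/2}`. -/
noncomputable def localNorm {n : ℕ} (p : MvPolynomial (Fin n) ℝ) (e' v : Fin n → ℝ) : ℝ :=
  Real.sqrt (localIP p e' v v)

/-- The closed quadratic cone `K_{e'}(α) = {x : ⟨e', x⟩_{e'} ≥ α ‖x‖_{e'}}`. -/
noncomputable def quadCone {n : ℕ} (p : MvPolynomial (Fin n) ℝ) (e' : Fin n → ℝ) (α : ℝ) :
    Set (Fin n → ℝ) :=
  {x | α * localNorm p e' x ≤ localIP p e' e' x}

/-- The hyperbolicity cone is regular: it contains no nonzero linear subspace. -/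
def IsRegularCone {n : ℕ} (p : MvPolynomial (Fin n) ℝ) (e : Fin n → ℝ) : Prop :=
  ∀ W : Submodule ℝ (Fin n → ℝ), (W : Set (Fin n → ℝ)) ⊆ hypConeClosed p e → W = ⊥

/-! ### Auxiliary lemmas for `stmt0` -/

lemma hypCharPoly_eval' {n : ℕ} (p : MvPolynomial (Fin n) ℝ) (e x : Fin n → ℝ) (t : ℝ) :
    Polynomial.eval t (hypCharPoly p e x) = MvPolynomial.eval (fun i => e i * t - x i) p := by
  have h := MvPolynomial.eval₂_comp_left (Polynomial.evalRingHom t)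
    (algebraMap ℝ (Polynomial ℝ))
    (fun i => Polynomial.C (e i) * Polynomial.X - Polynomial.C (x i)) p
  unfold hypCharPoly
  rw [MvPolynomial.aeval_def]
  show (Polynomial.evalRingHom t) _ = _
  rw [h, MvPolynomial.eval]
  congr 1
  · ext r; simp
  · funext i; simp

lemma aux_natDegree_prodpow {ι : Type*} (s : Finset ι) (g : ι → Polynomial ℝ)
    (hg : ∀ i, (g i).natDegree ≤ 1) (m : ι → ℕ) :
    (∏ i ∈ s, g i ^ m i).natDegree ≤ ∑ i ∈ s, m i := by
  refine (Polynomial.natDegree_prod_le s _).trans (Finset.sum_le_sum fun i _ => ?_)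
  calc (g i ^ m i).natDegree ≤ m i * (g i).natDegree := Polynomial.natDegree_pow_le
    _ ≤ m i * 1 := Nat.mul_le_mul_left _ (hg i)
    _ = m i := Nat.mul_one _

lemma aux_coeff_prodpow {ι : Type*} (s : Finset ι) (g : ι → Polynomial ℝ)
    (hg : ∀ i, (g i).natDegree ≤ 1) (m : ι → ℕ) :
    (∏ i ∈ s, g i ^ m i).coeff (∑ i ∈ s, m i) = ∏ i ∈ s, ((g i).coeff 1) ^ m i := by
  classical
  induction s using Finset.induction_on with
  | empty => simp
  | @insert a s ha ih =>
    rw [Finset.prod_insert ha, Finset.sum_insert ha, Finset.prod_insert ha,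
      Polynomial.coeff_mul_add_eq_of_natDegree_le ?h1 (aux_natDegree_prodpow s g hg m), ih]
    · congr 1
      have := Polynomial.coeff_pow_of_natDegree_le (hg a) (m := m a)
      simpa using this
    case h1 => calc (g a ^ m a).natDegree ≤ m a * (g a).natDegree := Polynomial.natDegree_pow_le
      _ ≤ m a * 1 := Nat.mul_le_mul_left _ (hg a)
      _ = m a := Nat.mul_one _

lemma aux_support_sum {n : ℕ} {p : MvPolynomial (Fin n) ℝ} {d : ℕ}
    (hp : p.IsHomogeneous d) {m : Fin n →₀ ℕ} (hm : m ∈ p.support) :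
    ∑ i, m i = d := by
  have h1 : m.degree = d := by
    by_contra h
    exact (MvPolynomial.mem_support_iff.mp hm) (hp.coeff_eq_zero h)
  rw [← h1, Finsupp.degree]
  exact (Finset.sum_subset (Finset.subset_univ _) (fun i _ hi =>
    Finsupp.notMem_support_iff.mp hi)).symm

lemma aux_eval_smul {n : ℕ} {p : MvPolynomial (Fin n) ℝ} {d : ℕ}
    (hp : p.IsHomogeneous d) (c : ℝ) (x : Fin n → ℝ) :
    MvPolynomial.eval (c • x) p = c ^ d * MvPolynomial.eval x p := by
  rw [MvPolynomial.eval_eq', MvPolynomial.eval_eq', Finset.mul_sum]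
  refine Finset.sum_congr rfl fun m hm => ?_
  have hsum := aux_support_sum hp hm
  have : ∏ i, (c • x) i ^ m i = c ^ d * ∏ i, x i ^ m i := by
    simp only [Pi.smul_apply, smul_eq_mul, mul_pow]
    rw [Finset.prod_mul_distrib, Finset.prod_pow_eq_pow_sum, hsum]
  rw [this]; ring

lemma hypCharPoly_eq_sum {n : ℕ} (p : MvPolynomial (Fin n) ℝ) (e x : Fin n → ℝ) :
    hypCharPoly p e x = ∑ m ∈ p.support, Polynomial.C (MvPolynomial.coeff m p) *
      ∏ i, (Polynomial.C (e i) * Polynomial.X - Polynomial.C (x i)) ^ m i := by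
  rw [hypCharPoly, MvPolynomial.aeval_def, MvPolynomial.eval₂_eq']
  rfl

lemma aux_gdeg {n : ℕ} (e x : Fin n → ℝ) :
    ∀ i, (Polynomial.C (e i) * Polynomial.X - Polynomial.C (x i)).natDegree ≤ 1 := by
  intro i
  refine (Polynomial.natDegree_sub_le _ _).trans ?_
  simp only [max_le_iff]
  exact ⟨(Polynomial.natDegree_C_mul_le _ _).trans (by simp), by simp⟩

lemma hypCharPoly_natDegree_le {n d : ℕ} {p : MvPolynomial (Fin n) ℝ}
    (hp : p.IsHomogeneous d) (e x : Fin n → ℝ) :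
    (hypCharPoly p e x).natDegree ≤ d := by
  rw [hypCharPoly_eq_sum]
  refine Polynomial.natDegree_sum_le_of_forall_le _ _ fun m hm => ?_
  refine (Polynomial.natDegree_C_mul_le _ _).trans ?_
  exact (aux_natDegree_prodpow _ _ (aux_gdeg e x) _).trans (le_of_eq (aux_support_sum hp hm))

lemma hypCharPoly_coeff_d {n d : ℕ} {p : MvPolynomial (Fin n) ℝ}
    (hp : p.IsHomogeneous d) (e x : Fin n → ℝ) :
    (hypCharPoly p e x).coeff d = MvPolynomial.eval e p := by
  rw [hypCharPoly_eq_sum, Polynomial.finset_sum_coeff, MvPolynomial.eval_eq']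
  refine Finset.sum_congr rfl fun m hm => ?_
  rw [Polynomial.coeff_C_mul, ← aux_support_sum hp hm, aux_coeff_prodpow _ _ (aux_gdeg e x)]
  congr 1
  refine Finset.prod_congr rfl fun i _ => ?_
  congr 1
  simp [Polynomial.coeff_sub]

/-- Helton–Vinnikov / Lemma 8.2 in RS14.
If `p` is homogeneous of degree `d`, hyperbolic in direction `e`, and `L` is a two-dimensional
subspace of `ℝⁿ` containing `e`, then there is a linear map `M : L → ℝᵈ` with `Me = (1,…,1)`
and `p(x) = p(e) ⬝ ∏ᵢ (Mx)ᵢ` for all `x ∈ L`. -/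
theorem stmt0 {n d : ℕ} (hd : 1 ≤ d) (p : MvPolynomial (Fin n) ℝ) (e : Fin n → ℝ)
    (hp : IsHyperbolicPoly p e d)
    (L : Submodule ℝ (Fin n → ℝ)) (hL : Module.finrank ℝ L = 2) (heL : e ∈ L) :
    ∃ M : L →ₗ[ℝ] (Fin d → ℝ),
      M ⟨e, heL⟩ = (fun _ => (1 : ℝ)) ∧
      ∀ x : L, MvPolynomial.eval (x : Fin n → ℝ) p =
        MvPolynomial.eval e p * ∏ i, M x i := by
    classical
  obtain ⟨hhom, hpe, hroots⟩ := hp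
  -- e ≠ 0
  have he0 : e ≠ 0 := by
    intro h
    apply hpe
    have h2 := aux_eval_smul hhom 0 (0 : Fin n → ℝ)
    rw [smul_zero] at h2
    have h3 : MvPolynomial.eval (0 : Fin n → ℝ) p = 0 := by
      rw [h2, zero_pow (by omega), zero_mul]
    rw [h]; exact h3
  set u : L := ⟨e, heL⟩ with hu_def
  have hu : u ≠ 0 := by
    simp only [hu_def, ne_eq, Submodule.mk_eq_zero]
    exact he0
  -- find a second basis vector
  have hv : ∃ v : L, v ∉ Submodule.span ℝ {u} := by
    by_contra h
    push_neg at h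
    have htop : Submodule.span ℝ {u} = ⊤ := Submodule.eq_top_iff'.mpr h
    have h1 : Module.finrank ℝ (Submodule.span ℝ {u}) = 1 := finrank_span_singleton hu
    rw [htop, finrank_top, hL] at h1
    exact absurd h1 (by norm_num)
  obtain ⟨v, hv⟩ := hv
  have hli : LinearIndependent ℝ ![v, u] := by
    rw [linearIndependent_fin2]
    exact ⟨hu, fun a ha => hv (Submodule.mem_span_singleton.mpr ⟨a, ha⟩)⟩
  have hcard : Fintype.card (Fin 2) = Module.finrank ℝ L := by simp [hL]
  set B := basisOfLinearIndependentOfCardEqFinrank hli hcard with hB_def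
  have hB : ∀ i, B i = ![v, u] i := by
    intro i; rw [hB_def, coe_basisOfLinearIndependentOfCardEqFinrank]
  have hB0 : B 0 = v := hB 0
  have hB1 : B 1 = u := hB 1
  set w : Fin n → ℝ := (v : Fin n → ℝ) with hw_def
  set q : Polynomial ℝ := hypCharPoly p e (-w) with hq_def
  have hq_card : Multiset.card q.roots = d := hroots (-w)
  have hcoeff : q.coeff d = MvPolynomial.eval e p := hypCharPoly_coeff_d hhom e (-w)
  have hdeg : q.natDegree = d :=
    le_antisymm (hypCharPoly_natDegree_le hhom e (-w))
      (Polynomial.le_natDegree_of_ne_zero (hcoeff ▸ hpe))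
  have hlead : q.leadingCoeff = MvPolynomial.eval e p := by
    rw [Polynomial.leadingCoeff, hdeg, hcoeff]
  have hfact : Polynomial.C (MvPolynomial.eval e p) *
      (q.roots.map fun a => Polynomial.X - Polynomial.C a).prod = q := by
    rw [← hlead]
    exact Polynomial.C_leadingCoeff_mul_prod_multiset_X_sub_C (by rw [hq_card, hdeg])
  -- evaluation formula
  have heval : ∀ s : ℝ, MvPolynomial.eval (s • e + w) p =
      MvPolynomial.eval e p * (q.roots.map fun r => s - r).prod := by
    intro s
    have h1 := hypCharPoly_eval' p e (-w) s
    have h2 : (fun i => e i * s - (-w) i) = s • e + w := by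
      funext i; simp [mul_comm]
    rw [h2] at h1
    rw [← h1]
    show Polynomial.eval s q = _
    conv_lhs => rw [← hfact]
    rw [Polynomial.eval_mul, Polynomial.eval_C, Polynomial.eval_multiset_prod,
      Multiset.map_map]
    have h3 : Multiset.map (Polynomial.eval s ∘ fun a => Polynomial.X - Polynomial.C a) q.roots
        = Multiset.map (fun r => s - r) q.roots :=
      Multiset.map_congr rfl fun r _ => by simp
    rw [h3]
  -- enumerate the roots
  set lst : List ℝ := q.roots.toList with hlst_def
  have hlen : lst.length = d := by rw [hlst_def, Multiset.length_toList, hq_card]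
  set μ : Fin d → ℝ := fun i => lst.get (Fin.cast hlen.symm i) with hμ_def
  have hprod : ∀ f : ℝ → ℝ, (q.roots.map f).prod = ∏ i : Fin d, f (μ i) := by
    intro f
    have h1 : q.roots = (lst : Multiset ℝ) := (Multiset.coe_toList q.roots).symm
    rw [h1, Multiset.map_coe, Multiset.prod_coe, ← Fin.prod_univ_fun_getElem lst f]
    exact Fintype.prod_equiv (finCongr hlen) _ _ (fun j => rfl)
  -- the linear map
  refine ⟨LinearMap.pi (fun i : Fin d => B.coord 1 - μ i • B.coord 0), ?_, ?_⟩
  · funext i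
    have h1 : B.repr u = Finsupp.single 1 1 := by rw [← hB1, Module.Basis.repr_self]
    simp [LinearMap.pi_apply, Module.Basis.coord_apply, ← hu_def, h1, Finsupp.single_apply]
  · intro x
    have h1 := B.sum_repr x
    rw [Fin.sum_univ_two, hB0, hB1] at h1
    set a : ℝ := B.repr x 1 with ha_def
    set b : ℝ := B.repr x 0 with hb_def
    have hM : ∀ i : Fin d,
        (LinearMap.pi (fun i : Fin d => B.coord 1 - μ i • B.coord 0)) x i = a - μ i * b := by
      intro i
      simp [LinearMap.pi_apply, Module.Basis.coord_apply, ← ha_def, ← hb_def]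
    have hx : (x : Fin n → ℝ) = a • e + b • w := by
      have h2 : (x : Fin n → ℝ) = ((b • v + a • u : L) : Fin n → ℝ) :=
        congrArg _ h1.symm
      rw [h2]
      push_cast
      rw [add_comm]
    simp only [hM]
    by_cases hb : b = 0
    · rw [hx, hb, zero_smul, add_zero, aux_eval_smul hhom]
      simp only [hb, mul_zero, sub_zero]
      rw [Finset.prod_const, Finset.card_univ, Fintype.card_fin]
      ring
    · have hx2 : (x : Fin n → ℝ) = b • ((a / b) • e + w) := by
        rw [hx, smul_add, smul_smul, mul_div_cancel₀ a hb]
      rw [hx2, aux_eval_smul hhom, heval, hprod]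
      rw [show (b : ℝ) ^ d = ∏ _i : Fin d, b by
        rw [Finset.prod_const, Finset.card_univ, Fintype.card_fin]]
      rw [mul_left_comm, ← Finset.prod_mul_distrib]
      congr 1
      refine Finset.prod_congr rfl fun i _ => ?_
      field_simp
end

section
/- Let p be a real polynomial in n variables, homogeneous of degree d, hyperbolic in direction e ∈ ℝⁿ, let L be a two-dimensional linear subspace of ℝⁿ containing e, and let M : L → ℝᵈ be a linear map with Me = (1,…,1) and p(x) = p(e)·∏_{i=1}^{d}(Mx)_i for all x ∈ L. Then Λ₊₊ ∩ L = { x ∈ L : (Mx)_i > 0 for every i ∈ [d] }. -/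
open scoped BigOperators

theorem stmt1' {n d : ℕ} (p : MvPolynomial (Fin n) ℝ) (e : Fin n → ℝ)
    (hpe : MvPolynomial.eval e p ≠ 0)
    (L : Submodule ℝ (Fin n → ℝ)) (heL : e ∈ L)
    (M : L →ₗ[ℝ] (Fin d → ℝ))
    (hMe : M ⟨e, heL⟩ = fun _ => (1 : ℝ))
    (hMp : ∀ x : L, MvPolynomial.eval (x : Fin n → ℝ) p =
      MvPolynomial.eval e p * ∏ i, M x i)
    (x : L) :
    ((x : Fin n → ℝ) ∈ hypConeOpen p e ↔ ∀ i, 0 < M x i) := by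
  set c := MvPolynomial.eval e p with hc
  set a : Fin d → ℝ := M x with ha
  have key : hypCharPoly p e (x : Fin n → ℝ)
      = Polynomial.C c * ∏ i, (Polynomial.X - Polynomial.C (a i)) := by
    apply Polynomial.funext
    intro t
    rw [hypCharPoly_eval']
    have hy : (fun i => e i * t - (x : Fin n → ℝ) i) = ((t • (⟨e, heL⟩ : L) - x : L) : Fin n → ℝ) := by
      funext i
      simp [mul_comm]
    rw [hy, hMp]
    simp only [map_sub, map_smul, hMe]
    simp [Polynomial.eval_prod, a, Pi.smul_apply, smul_eq_mul, mul_one]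
  have hroots : (hypCharPoly p e (x : Fin n → ℝ)).roots = Multiset.map a Finset.univ.val := by
    rw [key, Polynomial.roots_C_mul _ hpe]
    have : (∏ i, (Polynomial.X - Polynomial.C (a i)))
        = ((Multiset.map a Finset.univ.val).map fun r => Polynomial.X - Polynomial.C r).prod := by
      rw [Multiset.map_map]
      rfl
    rw [this, Polynomial.roots_multiset_prod_X_sub_C]
  constructor
  · intro h i
    exact h (a i) (by rw [hroots]; exact Multiset.mem_map_of_mem a (Finset.mem_univ_val i))
  · intro h r hr
    rw [hroots] at hr
    obtain ⟨i, -, rfl⟩ := Multiset.mem_map.mp hr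
    exact h i

/-- Lemma 8.3 in RS14.
With `M : L → ℝᵈ` as in the Helton–Vinnikov style factorization,
`Λ₊₊ ∩ L = {x ∈ L : (Mx)ᵢ > 0 for all i}`. -/
theorem stmt1 {n d : ℕ} (hd : 1 ≤ d) (p : MvPolynomial (Fin n) ℝ) (e : Fin n → ℝ)
    (hp : IsHyperbolicPoly p e d)
    (L : Submodule ℝ (Fin n → ℝ)) (hL : Module.finrank ℝ L = 2) (heL : e ∈ L)
    (M : L →ₗ[ℝ] (Fin d → ℝ))
    (hMe : M ⟨e, heL⟩ = fun _ => (1 : ℝ))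
    (hMp : ∀ x : L, MvPolynomial.eval (x : Fin n → ℝ) p =
      MvPolynomial.eval e p * ∏ i, M x i) :
    ∀ x : L, ((x : Fin n → ℝ) ∈ hypConeOpen p e ↔ ∀ i, 0 < M x i) := by
  intro x
  exact stmt1' p e hp.2.1 L heL M hMe hMp x
end

section
/- Let p be a real polynomial in n variables, homogeneous of degree d, hyperbolic in direction e ∈ ℝⁿ, let L be a two-dimensional linear subspace of ℝⁿ containing e, and let M : L → ℝᵈ be a linear map with Me = (1,…,1) and p(x) = p(e)·∏_{i=1}^{d}(Mx)_i for all x ∈ L. Then for all u, v ∈ L: ⟨g(e), v⟩ = −∑_{i=1}^{d}(Mv)_i and uᵀH(e)v = (Mu)ᵀ(Mv), where g(e) and H(e) are the gradient and Hessian of f(x) = −ln p(x) at e. -/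
open scoped BigOperators

open Polynomial MvPolynomial

noncomputable def dirD {n : ℕ} (v : Fin n → ℝ) (q : MvPolynomial (Fin n) ℝ) :
    MvPolynomial (Fin n) ℝ :=
  ∑ i, MvPolynomial.C (v i) * MvPolynomial.pderiv i q

lemma pderiv_comm' {n : ℕ} (i j : Fin n) (q : MvPolynomial (Fin n) ℝ) :
    MvPolynomial.pderiv i (MvPolynomial.pderiv j q)
      = MvPolynomial.pderiv j (MvPolynomial.pderiv i q) := by
  induction q using MvPolynomial.induction_on with
  | C a => simp
  | add f g hf hg => simp [hf, hg]
  | mul_X f k hf =>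
    classical
    simp only [pderiv_mul, pderiv_X, map_add, pderiv_mul, hf]
    simp only [Pi.single_apply, apply_ite (pderiv i), apply_ite (pderiv j), map_one, map_zero,
      apply_ite (pderiv i), mul_ite, ite_mul, mul_one, mul_zero, one_mul, zero_mul]
    split_ifs <;> ring_nf <;> simp [hf]

lemma dirD_add {n : ℕ} (u v : Fin n → ℝ) (q : MvPolynomial (Fin n) ℝ) :
    dirD (u + v) q = dirD u q + dirD v q := by
  simp [dirD, add_mul, Finset.sum_add_distrib, map_add]

noncomputable def lineP {n : ℕ} (x v : Fin n → ℝ) (q : MvPolynomial (Fin n) ℝ) :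
    Polynomial ℝ :=
  MvPolynomial.aeval (fun i => Polynomial.C (x i) + Polynomial.C (v i) * Polynomial.X) q

lemma lineP_eval {n : ℕ} (x v : Fin n → ℝ) (q : MvPolynomial (Fin n) ℝ) (t : ℝ) :
    Polynomial.eval t (lineP x v q) = MvPolynomial.eval (x + t • v) q := by
  unfold lineP
  induction q using MvPolynomial.induction_on with
  | C a => simp
  | add f g hf hg =>
    simp only [map_add, Polynomial.eval_add]
    rw [hf, hg]
  | mul_X f k hf =>
    simp only [map_mul, Polynomial.eval_mul, MvPolynomial.aeval_X]
    rw [hf]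
    simp only [Polynomial.eval_add, Polynomial.eval_mul, Polynomial.eval_C, Polynomial.eval_X,
      MvPolynomial.eval_mul, MvPolynomial.eval_X, Pi.add_apply, Pi.smul_apply, smul_eq_mul]
    ring

lemma lineP_derivative {n : ℕ} (x v : Fin n → ℝ) (q : MvPolynomial (Fin n) ℝ) :
    Polynomial.derivative (lineP x v q) = lineP x v (dirD v q) := by
  unfold lineP
  induction q using MvPolynomial.induction_on with
  | C a => simp [dirD]
  | add f g hf hg =>
    have : dirD v (f + g) = dirD v f + dirD v g := by
      simp [dirD, mul_add, Finset.sum_add_distrib]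
    rw [map_add, Polynomial.derivative_add, hf, hg, this, map_add]
  | mul_X f k hf =>
    have hd : dirD v (f * MvPolynomial.X k) = dirD v f * MvPolynomial.X k
        + MvPolynomial.C (v k) * f := by
      classical
      simp only [dirD, pderiv_mul, mul_add, Finset.sum_add_distrib, Finset.sum_mul, mul_assoc]
      congr 1
      rw [Finset.sum_eq_single k]
      · simp
      · intro b _ hb
        simp [pderiv_X_of_ne (Ne.symm hb)]
      · simp
    rw [hd]
    simp only [map_add, map_mul, MvPolynomial.aeval_X, MvPolynomial.aeval_C,
      Polynomial.algebraMap_eq]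
    rw [Polynomial.derivative_mul, hf]
    simp only [Polynomial.derivative_add, Polynomial.derivative_C, Polynomial.derivative_C_mul,
      Polynomial.derivative_X, mul_one, zero_add]
    ring

lemma lineP_coeff0 {n : ℕ} (x v : Fin n → ℝ) (q : MvPolynomial (Fin n) ℝ) :
    (lineP x v q).coeff 0 = MvPolynomial.eval x q := by
  rw [Polynomial.coeff_zero_eq_eval_zero, lineP_eval]
  simp

lemma lineP_coeff1 {n : ℕ} (x v : Fin n → ℝ) (q : MvPolynomial (Fin n) ℝ) :
    (lineP x v q).coeff 1 = MvPolynomial.eval x (dirD v q) := by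
  have h := Polynomial.coeff_derivative (lineP x v q) 0
  rw [lineP_derivative, lineP_coeff0] at h
  simpa using h.symm

lemma lineP_coeff2 {n : ℕ} (x v : Fin n → ℝ) (q : MvPolynomial (Fin n) ℝ) :
    (lineP x v q).coeff 2 * 2 = MvPolynomial.eval x (dirD v (dirD v q)) := by
  have h := Polynomial.coeff_derivative (lineP x v q) 1
  rw [lineP_derivative, lineP_coeff1] at h
  push_cast at h
  linarith [h]

lemma prod_one_add_coeffs {ι : Type*} [DecidableEq ι] (s : Finset ι) (a : ι → ℝ) :
    ((∏ i ∈ s, (1 + Polynomial.C (a i) * Polynomial.X)).coeff 0 = 1 ∧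
     (∏ i ∈ s, (1 + Polynomial.C (a i) * Polynomial.X)).coeff 1 = ∑ i ∈ s, a i) ∧
    (∏ i ∈ s, (1 + Polynomial.C (a i) * Polynomial.X)).coeff 2 * 2
      = (∑ i ∈ s, a i) ^ 2 - ∑ i ∈ s, (a i) ^ 2 := by
  induction s using Finset.induction_on with
  | empty => simp [Polynomial.coeff_one]
  | insert _ _ hi =>
    rename_i i s ih
    obtain ⟨⟨h0, h1⟩, h2⟩ := ih
    rw [Finset.prod_insert hi, Finset.sum_insert hi, Finset.sum_insert hi]
    have expand : (1 + Polynomial.C (a i) * Polynomial.X) *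
        (∏ j ∈ s, (1 + Polynomial.C (a j) * Polynomial.X))
        = (∏ j ∈ s, (1 + Polynomial.C (a j) * Polynomial.X))
          + Polynomial.C (a i) * (Polynomial.X *
            (∏ j ∈ s, (1 + Polynomial.C (a j) * Polynomial.X))) := by ring
    rw [expand]
    set Q := ∏ j ∈ s, (1 + Polynomial.C (a j) * Polynomial.X) with hQ
    refine ⟨⟨?_, ?_⟩, ?_⟩
    · rw [Polynomial.coeff_add, Polynomial.coeff_C_mul, Polynomial.mul_coeff_zero]
      simp [h0]
    · have hx : (Polynomial.X * Q).coeff 1 = Q.coeff 0 := Polynomial.coeff_X_mul Q 0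
      rw [Polynomial.coeff_add, Polynomial.coeff_C_mul, hx, h0, h1]
      ring
    · have hx : (Polynomial.X * Q).coeff 2 = Q.coeff 1 := Polynomial.coeff_X_mul Q 1
      rw [Polynomial.coeff_add, Polynomial.coeff_C_mul, hx, h1]
      nlinarith [h2]

lemma dirD_right_add {n : ℕ} (v : Fin n → ℝ) (q r : MvPolynomial (Fin n) ℝ) :
    dirD v (q + r) = dirD v q + dirD v r := by
  simp [dirD, map_add, mul_add, Finset.sum_add_distrib]

lemma eval_dirD {n : ℕ} (x w : Fin n → ℝ) (q : MvPolynomial (Fin n) ℝ) :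
    MvPolynomial.eval x (dirD w q) = ∑ i, w i * MvPolynomial.eval x (MvPolynomial.pderiv i q) := by
  simp [dirD]

lemma eval_dirD2 {n : ℕ} (x u v : Fin n → ℝ) (q : MvPolynomial (Fin n) ℝ) :
    MvPolynomial.eval x (dirD u (dirD v q))
      = ∑ i, ∑ j, u i * v j *
          MvPolynomial.eval x (MvPolynomial.pderiv i (MvPolynomial.pderiv j q)) := by
  simp only [eval_dirD]
  refine Finset.sum_congr rfl fun i _ => ?_
  have : MvPolynomial.pderiv i (dirD v q)
      = ∑ j, MvPolynomial.C (v j) * MvPolynomial.pderiv i (MvPolynomial.pderiv j q) := by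
    simp [dirD, map_sum, pderiv_C_mul]
  rw [this]
  simp [Finset.mul_sum, mul_assoc]

lemma eval_dirD2_symm {n : ℕ} (x u v : Fin n → ℝ) (q : MvPolynomial (Fin n) ℝ) :
    MvPolynomial.eval x (dirD u (dirD v q)) = MvPolynomial.eval x (dirD v (dirD u q)) := by
  rw [eval_dirD2, eval_dirD2, Finset.sum_comm]
  refine Finset.sum_congr rfl fun i _ => Finset.sum_congr rfl fun j _ => ?_
  rw [pderiv_comm']
  ring

theorem stmt3' {n d : ℕ} (hd : 1 ≤ d) (p : MvPolynomial (Fin n) ℝ) (e : Fin n → ℝ)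
    (hpe : 0 < MvPolynomial.eval e p)
    (L : Submodule ℝ (Fin n → ℝ)) (heL : e ∈ L)
    (M : L →ₗ[ℝ] (Fin d → ℝ))
    (hMe : M ⟨e, heL⟩ = fun _ => (1 : ℝ))
    (hMp : ∀ x : L, MvPolynomial.eval (x : Fin n → ℝ) p =
      MvPolynomial.eval e p * ∏ i, M x i) :
    ∀ u v : L,
      (∑ i, gradNegLog p e i * (v : Fin n → ℝ) i) = -∑ i, M v i ∧
      localIP p e (u : Fin n → ℝ) (v : Fin n → ℝ) = ∑ i, M u i * M v i := by
  have hpe' : MvPolynomial.eval e p ≠ 0 := ne_of_gt hpe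
  -- the key polynomial factorization along lines through e
  have key : ∀ w : L, lineP e (w : Fin n → ℝ) p
      = Polynomial.C (MvPolynomial.eval e p) *
        ∏ i, (1 + Polynomial.C (M w i) * Polynomial.X) := by
    intro w
    apply Polynomial.funext
    intro t
    rw [lineP_eval]
    have hmem : e + t • (w : Fin n → ℝ) ∈ L := L.add_mem heL (L.smul_mem t w.2)
    have hsub : (⟨e + t • (w : Fin n → ℝ), hmem⟩ : L) = ⟨e, heL⟩ + t • w := by
      apply Subtype.ext; simp
    have h1 := hMp ⟨e + t • (w : Fin n → ℝ), hmem⟩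
    rw [hsub] at h1
    simp only [Submodule.coe_add, SetLike.val_smul, map_add, map_smul, hMe, Pi.add_apply,
      Pi.smul_apply, smul_eq_mul] at h1
    rw [h1]
    simp only [Polynomial.eval_mul, Polynomial.eval_C, Polynomial.eval_prod, Polynomial.eval_add,
      Polynomial.eval_one, Polynomial.eval_mul, Polynomial.eval_X]
    refine congrArg _ (Finset.prod_congr rfl fun i _ => by ring)
  -- first derivative along w ∈ L
  have c1 : ∀ w : L, MvPolynomial.eval e (dirD (w : Fin n → ℝ) p)
      = MvPolynomial.eval e p * ∑ i, M w i := by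
    intro w
    rw [← lineP_coeff1, key w, Polynomial.coeff_C_mul,
      ((prod_one_add_coeffs Finset.univ (fun i => M w i)).1).2]
  -- second derivative along w ∈ L
  have c2 : ∀ w : L, MvPolynomial.eval e (dirD (w : Fin n → ℝ) (dirD (w : Fin n → ℝ) p))
      = MvPolynomial.eval e p * ((∑ i, M w i) ^ 2 - ∑ i, (M w i) ^ 2) := by
    intro w
    have h := (prod_one_add_coeffs Finset.univ (fun i => M w i)).2
    have h2 := lineP_coeff2 e (w : Fin n → ℝ) p
    rw [key w, Polynomial.coeff_C_mul] at h2
    rw [← h2]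
    nlinarith [h]
  intro u v
  constructor
  · -- gradient identity
    have hgrad : (∑ i, gradNegLog p e i * (v : Fin n → ℝ) i)
        = -(MvPolynomial.eval e (dirD (v : Fin n → ℝ) p)) / MvPolynomial.eval e p := by
      rw [eval_dirD, ← Finset.sum_neg_distrib, Finset.sum_div]
      refine Finset.sum_congr rfl fun i _ => ?_
      unfold gradNegLog
      ring
    rw [hgrad, c1 v, mul_comm, neg_div, mul_div_assoc, div_self hpe', mul_one]
  · -- Hessian identity
    set pe := MvPolynomial.eval e p with hpe_def
    have expand : localIP p e (u : Fin n → ℝ) (v : Fin n → ℝ)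
        = (MvPolynomial.eval e (dirD (u : Fin n → ℝ) p))
            * (MvPolynomial.eval e (dirD (v : Fin n → ℝ) p)) / pe ^ 2
          - (MvPolynomial.eval e (dirD (u : Fin n → ℝ) (dirD (v : Fin n → ℝ) p))) / pe := by
      rw [eval_dirD, eval_dirD, eval_dirD2, Finset.sum_mul_sum, Finset.sum_div, Finset.sum_div,
        ← Finset.sum_sub_distrib]
      refine Finset.sum_congr rfl fun i _ => ?_
      rw [Finset.sum_div, Finset.sum_div, ← Finset.sum_sub_distrib]
      refine Finset.sum_congr rfl fun j _ => ?_
      unfold hessNegLog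
      simp only [Matrix.of_apply]
      ring
    -- abbreviations
    set Su := ∑ i, M u i
    set Sv := ∑ i, M v i
    set Quu := ∑ i, (M u i) ^ 2
    set Qvv := ∑ i, (M v i) ^ 2
    set Quv := ∑ i, M u i * M v i
    have hsum : ∑ i, M (u + v) i = Su + Sv := by
      simp [map_add, Finset.sum_add_distrib]
      rfl
    have hsq : ∑ i, (M (u + v) i) ^ 2 = Quu + 2 * Quv + Qvv := by
      have : ∀ i : Fin d, (M (u + v) i) ^ 2
          = (M u i) ^ 2 + 2 * (M u i * M v i) + (M v i) ^ 2 := by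
        intro i; simp only [map_add, Pi.add_apply]; ring
      rw [Finset.sum_congr rfl fun i _ => this i]
      simp [Finset.sum_add_distrib, ← Finset.mul_sum]
      rfl
    have hcoe : ((u + v : L) : Fin n → ℝ) = (u : Fin n → ℝ) + (v : Fin n → ℝ) := rfl
    set Buv := MvPolynomial.eval e (dirD (u : Fin n → ℝ) (dirD (v : Fin n → ℝ) p)) with hBuv
    have hexp : MvPolynomial.eval e
        (dirD ((u + v : L) : Fin n → ℝ) (dirD ((u + v : L) : Fin n → ℝ) p))
        = MvPolynomial.eval e (dirD (u : Fin n → ℝ) (dirD (u : Fin n → ℝ) p))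
          + 2 * Buv
          + MvPolynomial.eval e (dirD (v : Fin n → ℝ) (dirD (v : Fin n → ℝ) p)) := by
      rw [hcoe, dirD_add, dirD_add, dirD_right_add, dirD_right_add]
      rw [map_add, map_add, map_add]
      have hs := eval_dirD2_symm e (u : Fin n → ℝ) (v : Fin n → ℝ) p
      rw [hBuv]
      linarith [hs]
    rw [c2 (u + v), c2 u, c2 v, hsum, hsq] at hexp
    have hBuv_val : Buv = pe * (Su * Sv - Quv) := by nlinarith [hexp]
    rw [expand, c1 u, c1 v, hBuv_val]
    field_simp
    ring

/-- Lemma 8.5 in RS14.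
With `M : L → ℝᵈ` as in the factorization, for all `u, v ∈ L`:
`⟨g(e), v⟩ = -∑ᵢ (Mv)ᵢ` and `uᵀ H(e) v = (Mu)ᵀ (Mv)`, where `g(e)` and `H(e)` are the
gradient and Hessian of `f(x) = -ln p(x)` at `e`. -/
theorem stmt3 {n d : ℕ} (hd : 1 ≤ d) (p : MvPolynomial (Fin n) ℝ) (e : Fin n → ℝ)
    (hp : IsHyperbolicPoly p e d) (hpe : 0 < MvPolynomial.eval e p)
    (L : Submodule ℝ (Fin n → ℝ)) (hL : Module.finrank ℝ L = 2) (heL : e ∈ L)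
    (M : L →ₗ[ℝ] (Fin d → ℝ))
    (hMe : M ⟨e, heL⟩ = fun _ => (1 : ℝ))
    (hMp : ∀ x : L, MvPolynomial.eval (x : Fin n → ℝ) p =
      MvPolynomial.eval e p * ∏ i, M x i) :
    ∀ u v : L,
      (∑ i, gradNegLog p e i * (v : Fin n → ℝ) i) = -∑ i, M v i ∧
      localIP p e (u : Fin n → ℝ) (v : Fin n → ℝ) = ∑ i, M u i * M v i := by
  exact stmt3' hd p e hpe L heL M hMe hMp
end

section
/- Let E ∈ ℝ^{d×d} be a symmetric positive definite matrix and let 0 < α < √d. Then the dual cone of K_E(α) in the space of symmetric d×d matrices with the trace inner product satisfies K_E(α)* := {Y symmetric : tr(XY) ≥ 0 for all X ∈ K_E(α)} = K_{E⁻¹}(√(d−α²)). -/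
open scoped BigOperators

/-- The matrix quadratic cone
`K_E(β) = {Z symmetric : tr(E⁻¹Z) ≥ β (tr((E⁻¹Z)²))^{1/2}}` for a positive definite `E`. -/
noncomputable def matQuadCone {d : ℕ} (E : Matrix (Fin d) (Fin d) ℝ) (β : ℝ) :
    Set (Matrix (Fin d) (Fin d) ℝ) :=
  {Z | Z.IsSymm ∧ β * Real.sqrt ((E⁻¹ * Z * (E⁻¹ * Z)).trace) ≤ (E⁻¹ * Z).trace}

section Helpers

variable {d : ℕ}



lemma trace_mul_eq_sum (W V : Matrix (Fin d) (Fin d) ℝ) (hV : V.IsSymm) :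
    (W * V).trace = ∑ p : Fin d × Fin d, W p.1 p.2 * V p.1 p.2 := by
  rw [Matrix.trace, Fintype.sum_prod_type]
  refine Finset.sum_congr rfl fun i _ => ?_
  rw [Matrix.diag_apply, Matrix.mul_apply]
  exact Finset.sum_congr rfl fun j _ => by rw [hV.apply j i]

lemma trace_sq_nonneg (W : Matrix (Fin d) (Fin d) ℝ) (hW : W.IsSymm) : 0 ≤ (W * W).trace := by
  rw [trace_mul_eq_sum W W hW]
  exact Finset.sum_nonneg fun p _ => mul_self_nonneg _

lemma neg_sqrt_le_trace_mul (W V : Matrix (Fin d) (Fin d) ℝ) (hW : W.IsSymm) (hV : V.IsSymm) :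
    -(Real.sqrt ((W*W).trace) * Real.sqrt ((V*V).trace)) ≤ (W*V).trace := by
  have h1 : ((W*V).trace)^2 ≤ ((W*W).trace) * ((V*V).trace) := by
    rw [trace_mul_eq_sum W V hV, trace_mul_eq_sum W W hW, trace_mul_eq_sum V V hV]
    simpa [pow_two] using Finset.sum_mul_sq_le_sq_mul_sq Finset.univ
      (fun p : Fin d × Fin d => W p.1 p.2) (fun p => V p.1 p.2)
  have h2 : |(W*V).trace| ≤ Real.sqrt ((W*W).trace) * Real.sqrt ((V*V).trace) := by
    rw [← Real.sqrt_mul_self (abs_nonneg _), ← Real.sqrt_mul (trace_sq_nonneg W hW)]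
    exact Real.sqrt_le_sqrt (by rwa [← pow_two, sq_abs])
  linarith [neg_abs_le ((W*V).trace)]

lemma isSymm_comb (a b : ℝ) (x : Matrix (Fin d) (Fin d) ℝ) (hx : x.IsSymm) :
    (a • x - b • (1 : Matrix (Fin d) (Fin d) ℝ)).IsSymm := by
  unfold Matrix.IsSymm at *
  rw [Matrix.transpose_sub, Matrix.transpose_smul, Matrix.transpose_smul,
    Matrix.transpose_one, hx]

lemma trace_comb_mul (a b c e : ℝ) (x y : Matrix (Fin d) (Fin d) ℝ) :
    ((a • x - b • (1:Matrix (Fin d) (Fin d) ℝ)) * (c • y - e • 1)).trace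
      = a*c*(x*y).trace - a*e*x.trace - b*c*y.trace + b*e*d := by
  simp [Matrix.sub_mul, Matrix.mul_sub, Matrix.smul_mul, Matrix.mul_smul,
    Matrix.trace_smul, Matrix.trace_one, smul_eq_mul, smul_smul]
  ring

lemma trace_comb_mul_right (a b : ℝ) (x y : Matrix (Fin d) (Fin d) ℝ) :
    ((a • x - b • (1:Matrix (Fin d) (Fin d) ℝ)) * y).trace = a*(x*y).trace - b*y.trace := by
  have h := trace_comb_mul a b 1 0 x y
  simpa using h


lemma isSymm_conj (S x : Matrix (Fin d) (Fin d) ℝ) (hS : S.IsSymm) (hx : x.IsSymm) :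
    (S * x * S).IsSymm := by
  rw [Matrix.IsSymm, Matrix.transpose_mul, Matrix.transpose_mul, hS, hx, Matrix.mul_assoc]

lemma trace_conj_sq (A B X : Matrix (Fin d) (Fin d) ℝ) :
    ((A*X*B)*(A*X*B)).trace = ((B*A*X)*(B*A*X)).trace := by
  calc ((A*X*B)*(A*X*B)).trace = ((A*X*B*A*X)*B).trace := by simp only [Matrix.mul_assoc]
    _ = (B*(A*X*B*A*X)).trace := Matrix.trace_mul_comm _ _
    _ = ((B*A*X)*(B*A*X)).trace := by simp only [Matrix.mul_assoc]

/-- Backward direction, identity case. -/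
lemma pair_nonneg (hd : 1 ≤ d) {α : ℝ} (hα : 0 < α) (hα2 : α^2 < d)
    (x y : Matrix (Fin d) (Fin d) ℝ) (hx : x.IsSymm) (hy : y.IsSymm)
    (hxc : α * Real.sqrt ((x*x).trace) ≤ x.trace)
    (hyc : Real.sqrt ((d:ℝ) - α^2) * Real.sqrt ((y*y).trace) ≤ y.trace) :
    0 ≤ (x * y).trace := by
  have hd0 : (0:ℝ) < d := by exact_mod_cast hd
  have hβ2 : (0:ℝ) ≤ (d:ℝ) - α^2 := by linarith
  set m2 := (x*x).trace with hm2def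
  set n2 := (y*y).trace with hn2def
  have hm2 : 0 ≤ m2 := trace_sq_nonneg x hx
  have hn2 : 0 ≤ n2 := trace_sq_nonneg y hy
  have htx0 : 0 ≤ x.trace := le_trans (by positivity) hxc
  have ht0 : 0 ≤ y.trace := le_trans (by positivity) hyc
  have htx2 : α^2 * m2 ≤ x.trace^2 := by
    have h1 : (α * Real.sqrt m2)^2 = α^2 * m2 := by
      rw [mul_pow, Real.sq_sqrt hm2]
    rw [← h1]
    exact pow_le_pow_left₀ (by positivity) hxc 2
  have ht2 : ((d:ℝ) - α^2) * n2 ≤ y.trace^2 := by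
    have h1 : (Real.sqrt ((d:ℝ)-α^2) * Real.sqrt n2)^2 = ((d:ℝ)-α^2) * n2 := by
      rw [mul_pow, Real.sq_sqrt hβ2, Real.sq_sqrt hn2]
    rw [← h1]
    exact pow_le_pow_left₀ (by positivity) hyc 2
  -- centered matrices
  set xp := (d:ℝ) • x - x.trace • (1 : Matrix (Fin d) (Fin d) ℝ) with hxp
  set yp := (d:ℝ) • y - y.trace • (1 : Matrix (Fin d) (Fin d) ℝ) with hyp
  have hxps : xp.IsSymm := isSymm_comb _ _ x hx
  have hyps : yp.IsSymm := isSymm_comb _ _ y hy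
  have hP2 : (xp*xp).trace = d^2*m2 - d*x.trace^2 := by
    rw [hxp, trace_comb_mul]; ring
  have hQ2 : (yp*yp).trace = d^2*n2 - d*y.trace^2 := by
    rw [hyp, trace_comb_mul]; ring
  have hXY : (xp*yp).trace = d^2*(x*y).trace - d*(x.trace*y.trace) := by
    rw [hxp, hyp, trace_comb_mul]; ring
  have hP2nn : 0 ≤ (xp*xp).trace := trace_sq_nonneg xp hxps
  have hQ2nn : 0 ≤ (yp*yp).trace := trace_sq_nonneg yp hyps
  have hCS := neg_sqrt_le_trace_mul xp yp hxps hyps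
  -- bound the product of sqrts
  have hP2b : (xp*xp).trace ≤ d*((d:ℝ)-α^2)*m2 := by
    rw [hP2]
    have := mul_le_mul_of_nonneg_left htx2 hd0.le
    linarith [this]
  have hQ2b : (yp*yp).trace ≤ d*α^2*n2 := by
    rw [hQ2]
    have := mul_le_mul_of_nonneg_left ht2 hd0.le
    linarith [this]
  have hs1 : Real.sqrt ((xp*xp).trace) * Real.sqrt ((yp*yp).trace)
      ≤ Real.sqrt (d*((d:ℝ)-α^2)*m2 * (d*α^2*n2)) := by
    rw [Real.sqrt_mul (mul_nonneg (mul_nonneg hd0.le hβ2) hm2)]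
    exact mul_le_mul (Real.sqrt_le_sqrt hP2b) (Real.sqrt_le_sqrt hQ2b)
      (Real.sqrt_nonneg _) (Real.sqrt_nonneg _)
  have hs2 : Real.sqrt (d*((d:ℝ)-α^2)*m2 * (d*α^2*n2)) ≤ d * (x.trace * y.trace) := by
    have h1 : d*((d:ℝ)-α^2)*m2 * (d*α^2*n2) = (α^2*m2) * (((d:ℝ)-α^2)*n2) * d^2 := by ring
    rw [h1]
    have hm : (α^2*m2)*(((d:ℝ)-α^2)*n2) ≤ x.trace^2*y.trace^2 :=
      mul_le_mul htx2 ht2 (mul_nonneg hβ2 hn2) (sq_nonneg _)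
    have h2 : Real.sqrt ((α^2*m2) * (((d:ℝ)-α^2)*n2) * d^2)
        ≤ Real.sqrt (x.trace^2 * y.trace^2 * d^2) :=
      Real.sqrt_le_sqrt (mul_le_mul_of_nonneg_right hm (sq_nonneg _))
    refine h2.trans ?_
    rw [show x.trace^2 * y.trace^2 * (d:ℝ)^2 = (d*(x.trace*y.trace))^2 by ring,
      Real.sqrt_sq (by positivity)]
  have hfin : 0 ≤ (d:ℝ)^2*(x*y).trace := by
    rw [hXY] at hCS
    have := hs1.trans hs2
    linarith
  have h := div_nonneg hfin (le_of_lt (pow_pos hd0 2))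
  rwa [mul_div_cancel_left₀ _ (by positivity : ((d:ℝ)^2) ≠ 0)] at h

/-- Forward direction, identity case. -/
lemma dual_mem_cone (hd : 1 ≤ d) {α : ℝ} (hα : 0 < α) (hα2 : α^2 < d)
    (y : Matrix (Fin d) (Fin d) ℝ) (hy : y.IsSymm)
    (hdual : ∀ x : Matrix (Fin d) (Fin d) ℝ, x.IsSymm →
      α * Real.sqrt ((x*x).trace) ≤ x.trace → 0 ≤ (x*y).trace) :
    Real.sqrt ((d:ℝ) - α^2) * Real.sqrt ((y*y).trace) ≤ y.trace := by
  have hd0 : (0:ℝ) < d := by exact_mod_cast hd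
  have hβ2 : (0:ℝ) ≤ (d:ℝ) - α^2 := by linarith
  set t := y.trace with htdef
  set n2 := (y*y).trace with hn2def
  have hn2 : 0 ≤ n2 := trace_sq_nonneg y hy
  -- step 1 : t ≥ 0
  have ht0 : 0 ≤ t := by
    have h1 : (1 : Matrix (Fin d) (Fin d) ℝ).IsSymm := Matrix.isSymm_one
    have h2 : ((1:Matrix (Fin d) (Fin d) ℝ) * 1).trace = (d:ℝ) := by
      simp [Matrix.trace_one, Fintype.card_fin]
    have h4 : (1:Matrix (Fin d) (Fin d) ℝ).trace = (d:ℝ) := by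
      simp [Matrix.trace_one, Fintype.card_fin]
    have h3 : α * Real.sqrt (((1:Matrix (Fin d) (Fin d) ℝ) * 1).trace)
        ≤ (1:Matrix (Fin d) (Fin d) ℝ).trace := by
      rw [h2, h4]
      have hle : α ≤ Real.sqrt d := by
        nlinarith [Real.sq_sqrt hd0.le, Real.sqrt_nonneg (d:ℝ)]
      calc α * Real.sqrt d ≤ Real.sqrt d * Real.sqrt d :=
            mul_le_mul_of_nonneg_right hle (Real.sqrt_nonneg _)
        _ = (d:ℝ) := Real.mul_self_sqrt hd0.le
    have h5 := hdual 1 h1 h3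
    rw [Matrix.one_mul] at h5
    rw [htdef]; exact h5
  -- centered matrix
  set yp := (d:ℝ) • y - t • (1 : Matrix (Fin d) (Fin d) ℝ) with hyp
  have hyps : yp.IsSymm := isSymm_comb _ _ y hy
  have hQ2 : (yp*yp).trace = d*(d*n2 - t^2) := by
    rw [hyp, trace_comb_mul, ← htdef, ← hn2def]; ring
  have hQ2nn : 0 ≤ (yp*yp).trace := trace_sq_nonneg yp hyps
  set u := (d:ℝ)*n2 - t^2 with hudef
  have hQ2' : (yp*yp).trace = d*u := by rw [hQ2, hudef]
  have hu : 0 ≤ u := by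
    by_contra h
    push_neg at h
    nlinarith [hQ2' ▸ hQ2nn, mul_pos hd0 (neg_pos.mpr h)]
  set Q := Real.sqrt ((yp*yp).trace) with hQdef
  have hQnn : 0 ≤ Q := Real.sqrt_nonneg _
  have hQsq : Q * Q = d * u := by rw [hQdef, Real.mul_self_sqrt hQ2nn, hQ2']
  set R := Real.sqrt ((d:ℝ)*((d:ℝ)-α^2)) with hRdef
  have hRnn : 0 ≤ R := Real.sqrt_nonneg _
  have hRsq : R * R = d*((d:ℝ)-α^2) := Real.mul_self_sqrt (mul_nonneg hd0.le hβ2)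
  have htyp : yp.trace = 0 := by
    rw [hyp, Matrix.trace_sub, Matrix.trace_smul, Matrix.trace_smul, Matrix.trace_one]
    simp [Fintype.card_fin, smul_eq_mul, ← htdef]
    ring
  -- step 2 : key inequality R * Q ≤ α * t * d
  have hkey : R * Q ≤ α * t * d := by
    rcases eq_or_lt_of_le hQnn with hQ0 | hQ0
    · rw [← hQ0, mul_zero]
      exact mul_nonneg (mul_nonneg hα.le ht0) hd0.le
    · set x := (-R) • yp - (-(α*Q)) • (1 : Matrix (Fin d) (Fin d) ℝ) with hxdef
      have hxs : x.IsSymm := isSymm_comb _ _ yp hyps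
      have hxx : (x*x).trace = d^2 * (Q*Q) := by
        rw [hxdef, trace_comb_mul, htyp, hQ2']
        linear_combination (α^2*(d:ℝ) - (d:ℝ)^2)*hQsq + ((d:ℝ)^2*n2 - (d:ℝ)*t^2)*hRsq
      have htx : x.trace = α*Q*d := by
        rw [hxdef, Matrix.trace_sub, Matrix.trace_smul, Matrix.trace_smul,
          Matrix.trace_one, htyp]
        simp only [smul_eq_mul, Fintype.card_fin, mul_zero]
        ring
      have hcone : α * Real.sqrt ((x*x).trace) ≤ x.trace := by
        rw [hxx, htx]
        have hs : Real.sqrt ((d:ℝ)^2 * (Q*Q)) = d * Q := by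
          rw [Real.sqrt_mul (sq_nonneg _), Real.sqrt_sq hd0.le, Real.sqrt_mul_self hQnn]
        rw [hs]
        exact le_of_eq (by ring)
      have hres := hdual x hxs hcone
      have hypy : (yp*y).trace = d*n2 - t^2 := by
        rw [hyp, trace_comb_mul_right, ← hn2def, ← htdef]; ring
      have htrxy : (x*y).trace = -R * (d*n2 - t^2) + α*Q*t := by
        rw [hxdef, trace_comb_mul_right, hypy, ← htdef]; ring
      rw [htrxy] at hres
      have h5 : R * u ≤ α * Q * t := by rw [hudef]; nlinarith [hres]
      have h6 : R * (Q*Q) ≤ α * Q * t * d := by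
        rw [hQsq]
        calc R * (d*u) = d * (R * u) := by ring
          _ ≤ d * (α*Q*t) := mul_le_mul_of_nonneg_left h5 hd0.le
          _ = α*Q*t*d := by ring
      have h7 : R * Q * Q ≤ (α * t * d) * Q := by calc
        R * Q * Q = R * (Q*Q) := by ring
        _ ≤ α * Q * t * d := h6
        _ = (α * t * d) * Q := by ring
      exact le_of_mul_le_mul_right h7 hQ0
  -- conclude
  have hsq : ((d:ℝ)-α^2) * n2 ≤ t^2 := by
    have h8 : (R*Q)*(R*Q) ≤ (α*t*d)*(α*t*d) :=
      mul_self_le_mul_self (mul_nonneg hRnn hQnn) hkey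
    have h9 : (d*((d:ℝ)-α^2)) * (d*u) ≤ α^2*t^2*d^2 := by
      calc (d*((d:ℝ)-α^2)) * (d*u) = (R*R) * (Q*Q) := by rw [hRsq, hQsq]
        _ = (R*Q)*(R*Q) := by ring
        _ ≤ (α*t*d)*(α*t*d) := h8
        _ = α^2*t^2*d^2 := by ring
    have h10 : ((d:ℝ)-α^2) * u ≤ α^2*t^2 := by
      have h11 : (d:ℝ)^2 * (((d:ℝ)-α^2)*u) ≤ (d:ℝ)^2 * (α^2*t^2) := by
        calc (d:ℝ)^2 * (((d:ℝ)-α^2)*u) = (d*((d:ℝ)-α^2))*(d*u) := by ring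
          _ ≤ α^2*t^2*d^2 := h9
          _ = (d:ℝ)^2 * (α^2*t^2) := by ring
      exact le_of_mul_le_mul_left h11 (by positivity)
    have hsum : (d:ℝ)*n2 = u + t^2 := by rw [hudef]; ring
    have h12 : (d:ℝ)*(((d:ℝ)-α^2)*n2) ≤ (d:ℝ)*t^2 := by
      calc (d:ℝ)*(((d:ℝ)-α^2)*n2) = ((d:ℝ)-α^2)*((d:ℝ)*n2) := by ring
        _ = ((d:ℝ)-α^2)*(u + t^2) := by rw [hsum]
        _ = ((d:ℝ)-α^2)*u + ((d:ℝ)-α^2)*t^2 := by ring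
        _ ≤ α^2*t^2 + ((d:ℝ)-α^2)*t^2 := by linarith
        _ = (d:ℝ)*t^2 := by ring
    exact le_of_mul_le_mul_left h12 hd0
  calc Real.sqrt ((d:ℝ)-α^2) * Real.sqrt n2 = Real.sqrt (((d:ℝ)-α^2)*n2) :=
        (Real.sqrt_mul hβ2 _).symm
    _ ≤ Real.sqrt (t^2) := Real.sqrt_le_sqrt hsq
    _ = t := by rw [Real.sqrt_sq ht0]

end Helpers

/-- Lemma 3.1 in RS14.
For a symmetric positive definite `E` and `0 < α < √d`, the dual cone of `K_E(α)` in the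
space of symmetric matrices with the trace inner product is `K_{E⁻¹}(√(d-α²))`. -/
theorem stmt11 {d : ℕ} (hd : 1 ≤ d) (E : Matrix (Fin d) (Fin d) ℝ)
    (hEs : E.IsSymm) (hE : E.PosDef)
    (α : ℝ) (hα : 0 < α) (hα' : α < Real.sqrt d) :
    {Y : Matrix (Fin d) (Fin d) ℝ | Y.IsSymm ∧ ∀ X ∈ matQuadCone E α, 0 ≤ (X * Y).trace} =
      matQuadCone E⁻¹ (Real.sqrt ((d : ℝ) - α ^ 2)) := by
  have hd0 : (0:ℝ) < d := by exact_mod_cast hd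
  have hα2 : α^2 < d := by
    nlinarith [Real.sq_sqrt hd0.le, Real.sqrt_nonneg (d:ℝ)]
  open scoped MatrixOrder in
  set S := CFC.sqrt E with hSdef
  open scoped MatrixOrder in
  have hS2 : S * S = E := CFC.sqrt_mul_sqrt_self E hE.posSemidef.nonneg
  have hSsymm : S.IsSymm := by
    open scoped MatrixOrder in
    have h : S.IsHermitian := (Matrix.nonneg_iff_posSemidef.mp (CFC.sqrt_nonneg E)).1
    simpa [Matrix.IsHermitian, Matrix.IsSymm, Matrix.conjTranspose_eq_transpose_of_trivial] using h
  have hdetS : IsUnit S.det := by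
    have h1 : S.det * S.det = E.det := by rw [← Matrix.det_mul, hS2]
    have h2 : 0 < E.det := hE.det_pos
    refine isUnit_iff_ne_zero.mpr fun h => ?_
    rw [h, mul_zero] at h1
    exact (ne_of_gt h2) h1.symm
  have hdetE : IsUnit E.det := isUnit_iff_ne_zero.mpr (ne_of_gt hE.det_pos)
  have hSS : S⁻¹ * S = 1 := Matrix.nonsing_inv_mul S hdetS
  have hSS' : S * S⁻¹ = 1 := Matrix.mul_nonsing_inv S hdetS
  have hEinv : E⁻¹ = S⁻¹ * S⁻¹ := by rw [← hS2, Matrix.mul_inv_rev]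
  have hEinvinv : E⁻¹⁻¹ = E := Matrix.nonsing_inv_nonsing_inv E hdetE
  have hSinv : S⁻¹.IsSymm := by
    rw [Matrix.IsSymm, Matrix.transpose_nonsing_inv, hSsymm]
  have key : ∀ x : Matrix (Fin d) (Fin d) ℝ, E⁻¹ * (S*x*S) = S⁻¹*(x*S) := by
    intro x
    rw [hEinv, show S⁻¹*S⁻¹*(S*x*S) = S⁻¹*((S⁻¹*S)*(x*S)) from by
      simp only [Matrix.mul_assoc], hSS, Matrix.one_mul]
  have htr1 : ∀ x : Matrix (Fin d) (Fin d) ℝ, (E⁻¹ * (S*x*S)).trace = x.trace := by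
    intro x
    rw [key, show S⁻¹*(x*S) = S⁻¹*x*S from (Matrix.mul_assoc _ _ _).symm,
      Matrix.trace_mul_cycle, show S*S⁻¹*x = (S*S⁻¹)*x from rfl, hSS', Matrix.one_mul]
  have htr2 : ∀ x : Matrix (Fin d) (Fin d) ℝ,
      ((E⁻¹ * (S*x*S)) * (E⁻¹ * (S*x*S))).trace = (x*x).trace := by
    intro x
    rw [key, show S⁻¹*(x*S) = S⁻¹*x*S from (Matrix.mul_assoc _ _ _).symm,
      trace_conj_sq, hSS', Matrix.one_mul]
  have htr3 : ∀ x Y : Matrix (Fin d) (Fin d) ℝ,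
      ((S*x*S) * Y).trace = (x * (S*Y*S)).trace := by
    intro x Y
    calc ((S*x*S)*Y).trace = (S*(x*(S*Y))).trace := by simp only [Matrix.mul_assoc]
      _ = ((x*(S*Y))*S).trace := Matrix.trace_mul_comm _ _
      _ = (x*(S*Y*S)).trace := by simp only [Matrix.mul_assoc]
  have htr4 : ∀ X : Matrix (Fin d) (Fin d) ℝ, (S⁻¹*X*S⁻¹).trace = (E⁻¹*X).trace := by
    intro X
    rw [Matrix.trace_mul_cycle, show S⁻¹*S⁻¹*X = (S⁻¹*S⁻¹)*X from rfl, ← hEinv]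
  have htr5 : ∀ X : Matrix (Fin d) (Fin d) ℝ,
      ((S⁻¹*X*S⁻¹)*(S⁻¹*X*S⁻¹)).trace = ((E⁻¹*X)*(E⁻¹*X)).trace := by
    intro X
    rw [trace_conj_sq, hEinv]
  have htr6 : ∀ X Y : Matrix (Fin d) (Fin d) ℝ,
      ((S⁻¹*X*S⁻¹)*(S*Y*S)).trace = (X*Y).trace := by
    intro X Y
    calc ((S⁻¹*X*S⁻¹)*(S*Y*S)).trace
        = (S⁻¹*(X*(S⁻¹*(S*(Y*S))))).trace := by simp only [Matrix.mul_assoc]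
      _ = (S⁻¹*(X*(Y*S))).trace := by
          rw [show S⁻¹*(S*(Y*S)) = (S⁻¹*S)*(Y*S) from (Matrix.mul_assoc _ _ _).symm,
            hSS, Matrix.one_mul]
      _ = ((X*(Y*S))*S⁻¹).trace := Matrix.trace_mul_comm _ _
      _ = (X*(Y*(S*S⁻¹))).trace := by simp only [Matrix.mul_assoc]
      _ = (X*Y).trace := by rw [hSS', Matrix.mul_one]
  have htr7 : ∀ Y : Matrix (Fin d) (Fin d) ℝ, (S*Y*S).trace = (E*Y).trace := by
    intro Y
    rw [Matrix.trace_mul_cycle, show S*S*Y = (S*S)*Y from rfl, hS2]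
  have htr8 : ∀ Y : Matrix (Fin d) (Fin d) ℝ,
      ((S*Y*S)*(S*Y*S)).trace = ((E*Y)*(E*Y)).trace := by
    intro Y
    rw [trace_conj_sq, hS2]
  ext Y
  simp only [Set.mem_setOf_eq, matQuadCone]
  constructor
  · rintro ⟨hYs, hdual⟩
    refine ⟨hYs, ?_⟩
    rw [hEinvinv]
    have hy := dual_mem_cone hd hα hα2 (S*Y*S) (isSymm_conj S Y hSsymm hYs) ?_
    · rw [htr7, htr8] at hy
      exact hy
    · intro x hxs hxc
      have hXmem : (S*x*S) ∈ matQuadCone E α := by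
        refine ⟨isSymm_conj S x hSsymm hxs, ?_⟩
        rw [show E⁻¹ * (S*x*S) * (E⁻¹ * (S*x*S)) = (E⁻¹ * (S*x*S)) * (E⁻¹ * (S*x*S))
          from rfl, htr2, htr1]
        exact hxc
      have h := hdual (S*x*S) hXmem
      rwa [htr3] at h
  · rintro ⟨hYs, hYc⟩
    rw [hEinvinv] at hYc
    refine ⟨hYs, ?_⟩
    rintro X ⟨hXs, hXc⟩
    have hx : (S⁻¹*X*S⁻¹).IsSymm := isSymm_conj S⁻¹ X hSinv hXs
    have hy : (S*Y*S).IsSymm := isSymm_conj S Y hSsymm hYs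
    have hc1 : α * Real.sqrt (((S⁻¹*X*S⁻¹)*(S⁻¹*X*S⁻¹)).trace) ≤ (S⁻¹*X*S⁻¹).trace := by
      rw [htr4, htr5]
      exact hXc
    have hc2 : Real.sqrt ((d:ℝ) - α^2) * Real.sqrt (((S*Y*S)*(S*Y*S)).trace)
        ≤ (S*Y*S).trace := by
      rw [htr7, htr8]
      exact hYc
    have h := pair_nonneg hd hα hα2 (S⁻¹*X*S⁻¹) (S*Y*S) hx hy hc1 hc2
    rwa [htr6] at h
end

section
/- Fix 0 < α < 1 and a nonzero symmetric matrix X ∈ ℝ^{d×d} (d ≥ 2) with tr X = α·(tr(X²))^{1/2}; set S = (1/(d−α²))·(I − (α²/tr X)·X), q(t) = tr(((I+tX)S)²), and E(t) = (1/(1+t))·(I+tX). Then: (i) q is a strictly convex quadratic polynomial with q(0) = 1/(d−α²) and q'(0) < 0; and (ii) for every t > −1 and every 0 < β < 1: [E(t) is positive definite and tr(SZ) > 0 for every nonzero Z ∈ K_{E(t)}(β)] if and only if q(t) < 1/(d−β²). -/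
open scoped BigOperators

open Finset Matrix

namespace Stmt13Aux

variable {d : ℕ}

lemma arith_core {D β T W P Q R : ℝ} (hD : 2 ≤ D) (hβ0 : 0 < β) (hβ1 : β < 1)
    (hT : 0 < T) (hWpos : 0 < W) (hP : (D - β ^ 2) * P < T ^ 2) (hW2 : β ^ 2 * Q ≤ W ^ 2)
    (key : (R - T * W / D) ^ 2 ≤ (P - T ^ 2 / D) * (Q - W ^ 2 / D))
    (hp0 : 0 ≤ P - T ^ 2 / D) (hq0 : 0 ≤ Q - W ^ 2 / D) : 0 < R := by
  have hdpos : (0:ℝ) < D := by linarith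
  have hd0 : D ≠ 0 := ne_of_gt hdpos
  have hβsq : β ^ 2 < 1 := by nlinarith
  have hβd : 0 < D - β ^ 2 := by linarith
  have hp0' : 0 ≤ D * P - T ^ 2 := by
    have h' := mul_le_mul_of_nonneg_left hp0 (le_of_lt hdpos)
    have e : D * (P - T ^ 2 / D) = D * P - T ^ 2 := by rw [mul_sub, mul_div_cancel₀ _ hd0]
    rw [e] at h'; linarith
  have hq0' : 0 ≤ D * Q - W ^ 2 := by
    have h' := mul_le_mul_of_nonneg_left hq0 (le_of_lt hdpos)
    have e : D * (Q - W ^ 2 / D) = D * Q - W ^ 2 := by rw [mul_sub, mul_div_cancel₀ _ hd0]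
    rw [e] at h'; linarith
  have key' : (D * R - T * W) ^ 2 ≤ (D * P - T ^ 2) * (D * Q - W ^ 2) := by
    have h := mul_le_mul_of_nonneg_left key (le_of_lt (by positivity : (0:ℝ) < D ^ 2))
    calc (D * R - T * W) ^ 2 = D ^ 2 * (R - T * W / D) ^ 2 := by
          field_simp
      _ ≤ D ^ 2 * ((P - T ^ 2 / D) * (Q - W ^ 2 / D)) := h
      _ = (D * P - T ^ 2) * (D * Q - W ^ 2) := by field_simp
  have h1 : (D - β ^ 2) * (D * P - T ^ 2) < β ^ 2 * T ^ 2 := by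
    have hh := mul_lt_mul_of_pos_left hP hdpos
    nlinarith [hh]
  have h2 : β ^ 2 * (D * Q - W ^ 2) ≤ (D - β ^ 2) * W ^ 2 := by
    have hh2 := mul_le_mul_of_nonneg_left hW2 (le_of_lt hdpos)
    nlinarith [hh2]
  have h3 : (D * P - T ^ 2) * (D * Q - W ^ 2) < T ^ 2 * W ^ 2 := by
    have hb2 : (0:ℝ) < β ^ 2 := by positivity
    have step1 : ((D - β ^ 2) * (D * P - T ^ 2)) * (β ^ 2 * (D * Q - W ^ 2))
        ≤ ((D - β ^ 2) * (D * P - T ^ 2)) * ((D - β ^ 2) * W ^ 2) :=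
      mul_le_mul_of_nonneg_left h2 (by positivity)
    have step2 : ((D - β ^ 2) * (D * P - T ^ 2)) * ((D - β ^ 2) * W ^ 2)
        < (β ^ 2 * T ^ 2) * ((D - β ^ 2) * W ^ 2) := by
      apply mul_lt_mul_of_pos_right h1
      positivity
    have hfin : ((D - β ^ 2) * β ^ 2) * ((D * P - T ^ 2) * (D * Q - W ^ 2))
        < ((D - β ^ 2) * β ^ 2) * (T ^ 2 * W ^ 2) := by
      calc ((D - β ^ 2) * β ^ 2) * ((D * P - T ^ 2) * (D * Q - W ^ 2))
          = ((D - β ^ 2) * (D * P - T ^ 2)) * (β ^ 2 * (D * Q - W ^ 2)) := by ring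
        _ ≤ _ := step1
        _ < (β ^ 2 * T ^ 2) * ((D - β ^ 2) * W ^ 2) := step2
        _ = ((D - β ^ 2) * β ^ 2) * (T ^ 2 * W ^ 2) := by ring
    exact lt_of_mul_lt_mul_left hfin (by positivity)
  by_contra hR
  push_neg at hR
  have h5 : 0 < T * W := mul_pos hT hWpos
  have h6 : D * R ≤ 0 := mul_nonpos_of_nonneg_of_nonpos (le_of_lt hdpos) hR
  have h7 : 0 ≤ (-(D * R)) * (T * W) := mul_nonneg (neg_nonneg.mpr h6) (le_of_lt h5)
  nlinarith [key', h3, h7, sq_nonneg (D * R)]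

/-- Cauchy–Schwarz style easy direction of the vector dual-cone lemma. -/
lemma vecDual_pos (hd : 2 ≤ d) {β : ℝ} (hβ0 : 0 < β) (hβ1 : β < 1)
    (tv wv : Fin d → ℝ) (hT : 0 < ∑ i, tv i)
    (hP : ((d : ℝ) - β ^ 2) * (∑ i, (tv i) ^ 2) < (∑ i, tv i) ^ 2)
    (hw : wv ≠ 0) (hcone : β * Real.sqrt (∑ i, (wv i) ^ 2) ≤ ∑ i, wv i) :
    0 < ∑ i, tv i * wv i := by
  set T := ∑ i, tv i with hTdef
  set W := ∑ i, wv i with hWdef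
  set P := ∑ i, (tv i) ^ 2 with hPdef
  set Q := ∑ i, (wv i) ^ 2 with hQdef
  set R := ∑ i, tv i * wv i with hRdef
  have hdpos : (0:ℝ) < d := by
    have : (2:ℝ) ≤ d := by exact_mod_cast hd
    linarith
  have hQpos : 0 < Q := by
    obtain ⟨j, hj⟩ := Function.ne_iff.mp hw
    have h1 : (wv j) ^ 2 ≤ Q := by
      apply Finset.single_le_sum (fun i _ => sq_nonneg (wv i)) (Finset.mem_univ j)
    have h2 : 0 < (wv j) ^ 2 := lt_of_le_of_ne (sq_nonneg _) (Ne.symm (pow_ne_zero 2 hj))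
    linarith
  have hWpos : 0 < W := lt_of_lt_of_le (by positivity) hcone
  have hW2 : β ^ 2 * Q ≤ W ^ 2 := by
    have h1 : (β * Real.sqrt Q) ^ 2 ≤ W ^ 2 := by
      apply pow_le_pow_left₀ (by positivity) hcone
    calc β ^ 2 * Q = (β * Real.sqrt Q) ^ 2 := by
          rw [mul_pow, Real.sq_sqrt hQpos.le]
      _ ≤ W ^ 2 := h1
  -- Cauchy–Schwarz on the centered vectors
  have key : (∑ i, (tv i - T / d) * (wv i - W / d)) ^ 2 ≤
      (∑ i, (tv i - T / d) ^ 2) * (∑ i, (wv i - W / d) ^ 2) := by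
    simpa [← mul_pow] using
      Finset.sum_mul_sq_le_sq_mul_sq Finset.univ (fun i => tv i - T / d) (fun i => wv i - W / d)
  have card_eq : ((Finset.univ : Finset (Fin d)).card : ℝ) = d := by simp
  have e1 : ∑ i, (tv i - T / d) * (wv i - W / d) = R - T * W / d := by
    have : ∀ i ∈ Finset.univ, (tv i - T / d) * (wv i - W / d)
        = tv i * wv i - (W / d) * tv i - (T / d) * wv i + (T / d) * (W / d) :=
      fun i _ => by ring
    rw [Finset.sum_congr rfl this]
    simp only [Finset.sum_add_distrib, Finset.sum_sub_distrib, ← Finset.mul_sum,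
      Finset.sum_const, card_univ, Fintype.card_fin, nsmul_eq_mul]
    rw [← hRdef, ← hTdef, ← hWdef]
    field_simp
    ring
  have e2 : ∑ i, (tv i - T / d) ^ 2 = P - T ^ 2 / d := by
    have : ∀ i ∈ Finset.univ, (tv i - T / d) ^ 2
        = tv i ^ 2 - (2 * T / d) * tv i + (T / d) ^ 2 := fun i _ => by ring
    rw [Finset.sum_congr rfl this]
    simp only [Finset.sum_add_distrib, Finset.sum_sub_distrib, ← Finset.mul_sum,
      Finset.sum_const, card_univ, Fintype.card_fin, nsmul_eq_mul]
    rw [← hPdef, ← hTdef]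
    field_simp
    ring
  have e3 : ∑ i, (wv i - W / d) ^ 2 = Q - W ^ 2 / d := by
    have : ∀ i ∈ Finset.univ, (wv i - W / d) ^ 2
        = wv i ^ 2 - (2 * W / d) * wv i + (W / d) ^ 2 := fun i _ => by ring
    rw [Finset.sum_congr rfl this]
    simp only [Finset.sum_add_distrib, Finset.sum_sub_distrib, ← Finset.mul_sum,
      Finset.sum_const, card_univ, Fintype.card_fin, nsmul_eq_mul]
    rw [← hQdef, ← hWdef]
    field_simp
    ring
  rw [e1, e2, e3] at key
  have hd2 : (2:ℝ) ≤ d := by exact_mod_cast hd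
  have hp0 : 0 ≤ P - T ^ 2 / d :=
    e2 ▸ (Finset.sum_nonneg fun i (_ : i ∈ Finset.univ) => sq_nonneg (tv i - T / d))
  have hq0 : 0 ≤ Q - W ^ 2 / d :=
    e3 ▸ (Finset.sum_nonneg fun i (_ : i ∈ Finset.univ) => sq_nonneg (wv i - W / d))
  exact arith_core hd2 hβ0 hβ1 hT hWpos hP hW2 key hp0 hq0

lemma vecDual_witness (hd : 2 ≤ d) {β : ℝ} (hβ0 : 0 < β) (hβ1 : β < 1)
    (tv : Fin d → ℝ) (hT : 0 < ∑ i, tv i)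
    (hP : (∑ i, tv i) ^ 2 ≤ ((d : ℝ) - β ^ 2) * (∑ i, (tv i) ^ 2)) :
    ∃ w : Fin d → ℝ, w ≠ 0 ∧ β * Real.sqrt (∑ i, (w i) ^ 2) ≤ ∑ i, w i ∧
      ∑ i, tv i * w i ≤ 0 := by
  have hd2 : (2:ℝ) ≤ d := by exact_mod_cast hd
  have hdpos : (0:ℝ) < d := by linarith
  have hd0 : ((d:ℝ)) ≠ 0 := ne_of_gt hdpos
  have hβsq : β ^ 2 < 1 := by nlinarith
  have hβd : 0 < (d:ℝ) - β ^ 2 := by linarith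
  set T := ∑ i, tv i with hTdef
  set P := ∑ i, (tv i) ^ 2 with hPdef
  set m := T / d with hmdef
  set p := P - T ^ 2 / d with hpdef
  clear_value T P m p
  have ep : ∑ i, (tv i - m) ^ 2 = p := by
    have h : ∀ i ∈ Finset.univ, (tv i - m) ^ 2
        = tv i ^ 2 - (2 * m) * tv i + m ^ 2 := fun i _ => by ring
    rw [Finset.sum_congr rfl h]
    simp only [Finset.sum_add_distrib, Finset.sum_sub_distrib, ← Finset.mul_sum,
      Finset.sum_const, card_univ, Fintype.card_fin, nsmul_eq_mul]
    rw [← hPdef, ← hTdef, hpdef, hmdef]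
    field_simp
    ring
  have esum : ∑ i, (tv i - m) = 0 := by
    rw [Finset.sum_sub_distrib, ← hTdef, Finset.sum_const, card_univ, Fintype.card_fin,
      nsmul_eq_mul, hmdef]
    field_simp
    ring
  have hPpos : 0 < P := by
    have : 0 < T ^ 2 := by positivity
    nlinarith
  have hppos : 0 < p := by
    have h1 : (d:ℝ) * p = d * P - T ^ 2 := by
      rw [hpdef, mul_sub, mul_div_cancel₀ _ hd0]
    have h2 : (d:ℝ) * P - T ^ 2 ≥ β ^ 2 * P := by nlinarith
    have h3 : 0 < β ^ 2 * P := by positivity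
    have h4 : 0 < (d:ℝ) * p := by linarith
    nlinarith [h4]
  set s₀ := p / T with hs0def
  clear_value s₀
  have hs0pos : 0 < s₀ := hs0def ▸ div_pos hppos hT
  refine ⟨fun i => s₀ - (tv i - m), ?_, ?_, ?_⟩
  · intro h
    have h0 := congrFun h
    have hsum : ∑ i, (s₀ - (tv i - m)) = 0 := by
      rw [show (fun i => s₀ - (tv i - m)) = (0 : Fin d → ℝ) from h] at *
      simp
    rw [Finset.sum_sub_distrib, esum, Finset.sum_const, card_univ, Fintype.card_fin,
      nsmul_eq_mul] at hsum
    have h10 : (d:ℝ) * s₀ > 0 := by positivity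
    simp at hsum
    rcases hsum with h9 | h9
    · omega
    · linarith
  · have hWsum : ∑ i, (s₀ - (tv i - m)) = d * s₀ := by
      rw [Finset.sum_sub_distrib, esum, Finset.sum_const, card_univ, Fintype.card_fin,
        nsmul_eq_mul]
      ring
    have hQsum : ∑ i, (s₀ - (tv i - m)) ^ 2 = d * s₀ ^ 2 + p := by
      have h : ∀ i ∈ Finset.univ, (s₀ - (tv i - m)) ^ 2
          = s₀ ^ 2 - (2 * s₀) * (tv i - m) + (tv i - m) ^ 2 := fun i _ => by ring
      rw [Finset.sum_congr rfl h]
      simp only [Finset.sum_add_distrib, Finset.sum_sub_distrib, ← Finset.mul_sum,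
        Finset.sum_const, card_univ, Fintype.card_fin, nsmul_eq_mul]
      rw [ep, ← hTdef, hmdef]
      have hTT : (d:ℝ) * (T / d) = T := mul_div_cancel₀ _ hd0
      rw [hTT]
      ring
    rw [hWsum, hQsum]
    -- key quantitative bound: β² (d s₀² + p) ≤ (d s₀)²
    have hkey : β ^ 2 * ((d:ℝ) * s₀ ^ 2 + p) ≤ ((d:ℝ) * s₀) ^ 2 := by
      -- from hP : T² ≤ (d - β²) P, derive β² T² ≤ d (d-β²) p
      have h1 : β ^ 2 * T ^ 2 ≤ (d:ℝ) * ((d:ℝ) - β ^ 2) * p := by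
        have e : (d:ℝ) * p = d * P - T ^ 2 := by
          rw [hpdef, mul_sub, mul_div_cancel₀ _ hd0]
        nlinarith [hP, hdpos]
      -- s₀ = p / T, so s₀² T² = p², and the target times T² follows
      have hT2 : (0:ℝ) < T ^ 2 := by positivity
      have e2 : s₀ * T = p := by rw [hs0def]; exact div_mul_cancel₀ _ (ne_of_gt hT)
      have h2 : β ^ 2 * ((d:ℝ) * s₀ ^ 2 + p) * T ^ 2 ≤ ((d:ℝ) * s₀) ^ 2 * T ^ 2 := by
        have expand1 : β ^ 2 * ((d:ℝ) * s₀ ^ 2 + p) * T ^ 2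
            = β ^ 2 * (d:ℝ) * p ^ 2 + β ^ 2 * p * T ^ 2 := by
          have h8 : s₀ ^ 2 * T ^ 2 = p ^ 2 := by rw [← mul_pow, e2]
          linear_combination (β ^ 2 * (d:ℝ)) * h8
        have expand2 : ((d:ℝ) * s₀) ^ 2 * T ^ 2 = (d:ℝ) ^ 2 * p ^ 2 := by
          have h8 : s₀ ^ 2 * T ^ 2 = p ^ 2 := by rw [← mul_pow, e2]
          linear_combination ((d:ℝ) ^ 2) * h8
        rw [expand1, expand2]
        -- need: β² d p² + β² p T² ≤ d² p²  ⇐  β² T² ≤ d (d - β²) p  (multiply by p > 0)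
        nlinarith [mul_le_mul_of_nonneg_left h1 (le_of_lt hppos)]
      exact le_of_mul_le_mul_right h2 hT2
    have hds0 : 0 ≤ (d:ℝ) * s₀ := by positivity
    have hQnn : 0 ≤ (d:ℝ) * s₀ ^ 2 + p := by positivity
    calc β * Real.sqrt ((d:ℝ) * s₀ ^ 2 + p)
        = Real.sqrt (β ^ 2 * ((d:ℝ) * s₀ ^ 2 + p)) := by
          rw [Real.sqrt_mul (by positivity), Real.sqrt_sq hβ0.le]
      _ ≤ Real.sqrt (((d:ℝ) * s₀) ^ 2) := Real.sqrt_le_sqrt hkey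
      _ = (d:ℝ) * s₀ := Real.sqrt_sq hds0
  · have h : ∀ i ∈ Finset.univ, tv i * (s₀ - (tv i - m))
        = s₀ * tv i - (tv i * tv i - m * tv i) := fun i _ => by ring
    rw [Finset.sum_congr rfl h]
    simp only [Finset.sum_sub_distrib, ← Finset.mul_sum, ← Finset.sum_mul]
    have e5 : ∑ i, tv i * tv i = P := by
      rw [hPdef]; exact Finset.sum_congr rfl fun i _ => (sq (tv i)).symm
    rw [e5, ← hTdef]
    have e6 : s₀ * T = p := by rw [hs0def]; exact div_mul_cancel₀ _ (ne_of_gt hT)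
    have e7 : m * T = T ^ 2 / d := by rw [hmdef]; field_simp
    rw [e6, e7, hpdef]
    ring_nf
    linarith

section MatrixHelpers

variable {U : Matrix (Fin d) (Fin d) ℝ}

lemma conj_mul (hU2 : Uᴴ * U = 1) (f g : Fin d → ℝ) :
    (U * Matrix.diagonal f * Uᴴ) * (U * Matrix.diagonal g * Uᴴ)
      = U * Matrix.diagonal (fun i => f i * g i) * Uᴴ := by
  have : Matrix.diagonal f * Matrix.diagonal g = Matrix.diagonal (fun i => f i * g i) := by
    rw [Matrix.diagonal_mul_diagonal]
  simp only [Matrix.mul_assoc]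
  rw [← Matrix.mul_assoc Uᴴ U, hU2, Matrix.one_mul, ← Matrix.mul_assoc (Matrix.diagonal f), this]

lemma conj_trace (hU2 : Uᴴ * U = 1) (f : Fin d → ℝ) :
    (U * Matrix.diagonal f * Uᴴ).trace = ∑ i, f i := by
  rw [Matrix.trace_mul_cycle, hU2, Matrix.one_mul, Matrix.trace_diagonal]

lemma conj_affine (hU1 : U * Uᴴ = 1) (a b : ℝ) (f : Fin d → ℝ) :
    a • (1 : Matrix (Fin d) (Fin d) ℝ) + b • (U * Matrix.diagonal f * Uᴴ)
      = U * Matrix.diagonal (fun i => a + b * f i) * Uᴴ := by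
  have h1 : Matrix.diagonal (fun i => a + b * f i)
      = a • (1 : Matrix (Fin d) (Fin d) ℝ) + b • Matrix.diagonal f := by
    ext i j
    by_cases h : i = j
    · subst h
      simp [Matrix.diagonal_apply_eq, Matrix.one_apply_eq]
    · simp [Matrix.diagonal_apply_ne _ h, Matrix.one_apply_ne h]
  rw [h1]
  simp only [Matrix.mul_add, Matrix.add_mul, Matrix.mul_smul, Matrix.smul_mul, Matrix.mul_one,
    hU1]

lemma trace_diag_mul (f : Fin d → ℝ) (M : Matrix (Fin d) (Fin d) ℝ) :
    (Matrix.diagonal f * M).trace = ∑ i, f i * M i i := by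
  simp [Matrix.trace, Matrix.diag, Matrix.diagonal_mul]

lemma trace_diag_mul_diag_mul (f g : Fin d → ℝ) (M N : Matrix (Fin d) (Fin d) ℝ) :
    ((Matrix.diagonal f * M) * (Matrix.diagonal g * N)).trace
      = ∑ i, ∑ j, f i * M i j * (g j * N j i) := by
  simp [Matrix.trace, Matrix.diag, Matrix.mul_apply, Matrix.diagonal_apply, ite_mul, zero_mul]

lemma posdef_conj (hU1 : U * Uᴴ = 1) {M : Matrix (Fin d) (Fin d) ℝ} (hM : M.PosDef) :
    (U * M * Uᴴ).PosDef := by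
  refine Matrix.PosDef.of_dotProduct_mulVec_pos ?_ ?_
  · show (U * M * Uᴴ)ᴴ = U * M * Uᴴ
    have hMt : Mᵀ = M := by
      have h := hM.1
      rwa [Matrix.IsHermitian, Matrix.conjTranspose_eq_transpose_of_trivial] at h
    simp [Matrix.conjTranspose_mul, hMt, Matrix.mul_assoc]
  · intro x hx
    have hy0 : Uᴴ *ᵥ x ≠ 0 := by
      intro h
      apply hx
      have hUx : U *ᵥ (Uᴴ *ᵥ x) = x := by
        rw [Matrix.mulVec_mulVec, hU1, Matrix.one_mulVec]
      rw [← hUx, h, Matrix.mulVec_zero]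
    have e : dotProduct (star x) ((U * M * Uᴴ) *ᵥ x)
        = dotProduct (star (Uᴴ *ᵥ x)) (M *ᵥ (Uᴴ *ᵥ x)) := by
      rw [Matrix.star_mulVec, Matrix.conjTranspose_conjTranspose, Matrix.mulVec_mulVec,
        Matrix.mul_assoc]
      nth_rewrite 1 [← Matrix.mulVec_mulVec]
      rw [dotProduct_mulVec]
    rw [e]
    exact hM.dotProduct_mulVec_pos hy0

lemma posdef_conj_iff (hU1 : U * Uᴴ = 1) (hU2 : Uᴴ * U = 1)
    (M : Matrix (Fin d) (Fin d) ℝ) : (U * M * Uᴴ).PosDef ↔ M.PosDef := by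
  constructor
  · intro h
    have h2 := posdef_conj (U := Uᴴ) (by simpa using hU2) h
    have e : Uᴴ * (U * M * Uᴴ) * Uᴴᴴ = M := by
      rw [Matrix.conjTranspose_conjTranspose]
      calc Uᴴ * (U * M * Uᴴ) * U = (Uᴴ * U) * M * (Uᴴ * U) := by
            simp only [Matrix.mul_assoc]
        _ = M := by rw [hU2, Matrix.one_mul, Matrix.mul_one]
    rwa [e] at h2
  · exact posdef_conj hU1

lemma conj_diag_isSymm (f : Fin d → ℝ) : (U * Matrix.diagonal f * Uᴴ).IsSymm := by
  have h : (U * Matrix.diagonal f * Uᴴ)ᴴ = U * Matrix.diagonal f * Uᴴ := by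
    simp [Matrix.conjTranspose_mul, Matrix.diagonal_conjTranspose, Matrix.mul_assoc]
  unfold Matrix.IsSymm
  rw [← Matrix.conjTranspose_eq_transpose_of_trivial, h]

lemma conj_mulM (hU2 : Uᴴ * U = 1) (M N : Matrix (Fin d) (Fin d) ℝ) :
    (U * M * Uᴴ) * (U * N * Uᴴ) = U * (M * N) * Uᴴ := by
  simp only [Matrix.mul_assoc]
  rw [← Matrix.mul_assoc Uᴴ U, hU2, Matrix.one_mul]

lemma conj_traceM (hU2 : Uᴴ * U = 1) (M : Matrix (Fin d) (Fin d) ℝ) :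
    (U * M * Uᴴ).trace = M.trace := by
  rw [Matrix.trace_mul_cycle, hU2, Matrix.one_mul]

lemma sandwich_mul (hU1 : U * Uᴴ = 1) (M Z : Matrix (Fin d) (Fin d) ℝ) :
    (U * M * Uᴴ) * Z = U * (M * (Uᴴ * Z * U)) * Uᴴ := by
  have h : U * (M * (Uᴴ * Z * U)) * Uᴴ = ((U * M * Uᴴ) * Z) * (U * Uᴴ) := by
    simp only [Matrix.mul_assoc]
  rw [h, hU1, Matrix.mul_one]

lemma sandwich_self (hU1 : U * Uᴴ = 1) (Z : Matrix (Fin d) (Fin d) ℝ) :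
    U * (Uᴴ * Z * U) * Uᴴ = Z := by
  have h : U * (Uᴴ * Z * U) * Uᴴ = (U * Uᴴ) * Z * (U * Uᴴ) := by
    simp only [Matrix.mul_assoc]
  rw [h, hU1, Matrix.one_mul, Matrix.mul_one]

lemma diag_conj_congr (f g : Fin d → ℝ) (h : ∀ i, f i = g i) :
    U * Matrix.diagonal f * Uᴴ = U * Matrix.diagonal g * Uᴴ := by
  rw [show f = g from funext h]

end MatrixHelpers

end Stmt13Aux


set_option maxHeartbeats 4000000 in
/-- Proposition 4.5 in RS14 for `E = I`.
With `X`, `S`, `q(t) = tr(((I+tX)S)²)` and `E(t) = (1/(1+t))(I+tX)` as given: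
(i) `q` is a strictly convex quadratic polynomial with `q(0) = 1/(d-α²)` and `q'(0) < 0`;
(ii) for every `t > -1` and `0 < β < 1`, `E(t) ≻ 0` and `S ∈ int(K_{E(t)}(β)*)`
(i.e. `tr(SZ) > 0` for every nonzero `Z ∈ K_{E(t)}(β)`) iff `q(t) < 1/(d-β²)`. -/
theorem stmt13 {d : ℕ} (hd : 2 ≤ d) (α : ℝ) (hα : 0 < α) (hα1 : α < 1)
    (X : Matrix (Fin d) (Fin d) ℝ) (hX0 : X ≠ 0) (hXs : X.IsSymm)
    (hXb : X.trace = α * Real.sqrt ((X * X).trace))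
    (S : Matrix (Fin d) (Fin d) ℝ)
    (hS : S = ((d : ℝ) - α ^ 2)⁻¹ • ((1 : Matrix (Fin d) (Fin d) ℝ) - (α ^ 2 / X.trace) • X))
    (q : ℝ → ℝ)
    (hq : ∀ t : ℝ, q t =
      ((((1 : Matrix (Fin d) (Fin d) ℝ) + t • X) * S) *
        (((1 : Matrix (Fin d) (Fin d) ℝ) + t • X) * S)).trace)
    (E : ℝ → Matrix (Fin d) (Fin d) ℝ)
    (hE : ∀ t : ℝ, E t = (1 + t)⁻¹ • ((1 : Matrix (Fin d) (Fin d) ℝ) + t • X)) :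
    ((∃ a b c : ℝ, 0 < a ∧ ∀ t : ℝ, q t = a * t ^ 2 + b * t + c) ∧
      q 0 = 1 / ((d : ℝ) - α ^ 2) ∧ deriv q 0 < 0) ∧
    (∀ t : ℝ, -1 < t → ∀ β : ℝ, 0 < β → β < 1 →
      (((E t).PosDef ∧ ∀ Z ∈ matQuadCone (E t) β, Z ≠ 0 → 0 < (S * Z).trace) ↔
        q t < 1 / ((d : ℝ) - β ^ 2))) := by
    classical
  open Stmt13Aux in
  have hdR : (2:ℝ) ≤ (d:ℝ) := by exact_mod_cast hd
  have hα2 : α ^ 2 < 1 := by nlinarith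
  have hden : 0 < (d:ℝ) - α ^ 2 := by linarith
  set k : ℝ := ((d : ℝ) - α ^ 2)⁻¹ with hk
  have hkpos : 0 < k := inv_pos.mpr hden
  have hk1 : ((d:ℝ) - α ^ 2) * k = 1 := mul_inv_cancel₀ (ne_of_gt hden)
  clear_value k
  -- spectral decomposition
  have hXh : X.IsHermitian := by
    rwa [Matrix.IsHermitian, Matrix.conjTranspose_eq_transpose_of_trivial]
  obtain ⟨U, lam, hU1, hU2, hXspec⟩ :
      ∃ (U : Matrix (Fin d) (Fin d) ℝ) (lam : Fin d → ℝ),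
        U * Uᴴ = 1 ∧ Uᴴ * U = 1 ∧ X = U * Matrix.diagonal lam * Uᴴ := by
    refine ⟨(hXh.eigenvectorUnitary : Matrix (Fin d) (Fin d) ℝ), hXh.eigenvalues, ?_, ?_, ?_⟩
    · have h := hXh.eigenvectorUnitary.2
      rw [Unitary.mem_iff] at h
      simpa [Matrix.star_eq_conjTranspose] using h.2
    · have h := hXh.eigenvectorUnitary.2
      rw [Unitary.mem_iff] at h
      simpa [Matrix.star_eq_conjTranspose] using h.1
    · have h := hXh.spectral_theorem
      simpa [Matrix.star_eq_conjTranspose] using h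
  -- basic trace identities
  have htrX : X.trace = ∑ i, lam i := by
    rw [hXspec, Stmt13Aux.conj_trace hU2]
  have htrX2 : (X * X).trace = ∑ i, lam i ^ 2 := by
    rw [hXspec, Stmt13Aux.conj_mul hU2, Stmt13Aux.conj_trace hU2]
    exact Finset.sum_congr rfl fun i _ => (sq (lam i)).symm
  have hL2pos : 0 < ∑ i, lam i ^ 2 := by
    rcases lt_or_eq_of_le (Finset.sum_nonneg fun i (_ : i ∈ Finset.univ) => sq_nonneg (lam i))
      with h | h
    · exact h
    · exfalso
      apply hX0
      have hz : ∀ i ∈ Finset.univ, lam i ^ 2 = 0 :=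
        (Finset.sum_eq_zero_iff_of_nonneg (fun i _ => sq_nonneg (lam i))).mp h.symm
      have hz' : lam = 0 := by
        funext i
        exact (pow_eq_zero_iff two_ne_zero).mp (hz i (Finset.mem_univ i))
      rw [hXspec, hz', show (0 : Fin d → ℝ) = (fun _ => 0) from rfl, Matrix.diagonal_zero,
        Matrix.mul_zero, Matrix.zero_mul]
  have hτ : ∑ i, lam i = α * Real.sqrt (∑ i, lam i ^ 2) := by
    rw [← htrX, ← htrX2, hXb]
  have hsqrtpos : 0 < Real.sqrt (∑ i, lam i ^ 2) := Real.sqrt_pos.mpr hL2pos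
  have hτpos : 0 < ∑ i, lam i := by rw [hτ]; positivity
  have hτ2 : (∑ i, lam i) ^ 2 = α ^ 2 * ∑ i, lam i ^ 2 := by
    rw [hτ, mul_pow, Real.sq_sqrt hL2pos.le]
  rw [htrX] at hS
  set c : ℝ := α ^ 2 / (∑ i, lam i) with hc
  have hcpos : 0 < c := div_pos (by positivity) hτpos
  have idA : c * (∑ i, lam i) = α ^ 2 := div_mul_cancel₀ _ (ne_of_gt hτpos)
  clear_value c
  have idB : c * (∑ i, lam i ^ 2) = ∑ i, lam i := by
    rw [hc, div_mul_eq_mul_div, div_eq_iff (ne_of_gt hτpos)]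
    linear_combination -hτ2
  have idC : c ^ 2 * (∑ i, lam i ^ 2) = α ^ 2 := by
    linear_combination c * idB + idA
  have hcsqrt : c * Real.sqrt (∑ i, lam i ^ 2) = α := by
    rw [hc, hτ]
    field_simp
  have habs : ∀ i, |lam i| ≤ Real.sqrt (∑ j, lam j ^ 2) := by
    intro i
    rw [← Real.sqrt_sq_eq_abs]
    exact Real.sqrt_le_sqrt
      (Finset.single_le_sum (fun j (_ : j ∈ Finset.univ) => sq_nonneg (lam j))
        (Finset.mem_univ i))
  have hclam : ∀ i, c * lam i ≤ α := by
    intro i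
    calc c * lam i ≤ c * |lam i| := by
          exact mul_le_mul_of_nonneg_left (le_abs_self _) hcpos.le
      _ ≤ c * Real.sqrt (∑ j, lam j ^ 2) :=
          mul_le_mul_of_nonneg_left (habs i) hcpos.le
      _ = α := hcsqrt
  -- the diagonal entries of S
  set sfun : Fin d → ℝ := fun i => k - k * c * lam i with hsfun
  clear_value sfun
  have hs_pos : ∀ i, 0 < sfun i := by
    intro i
    have h := hclam i
    simp only [hsfun]
    nlinarith [hkpos]
  have hSspec : S = U * Matrix.diagonal sfun * Uᴴ := by
    rw [hS, hXspec]
    have h1 : k • (1 : Matrix (Fin d) (Fin d) ℝ)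
          + (-(k * c)) • (U * Matrix.diagonal lam * Uᴴ)
        = k • ((1 : Matrix (Fin d) (Fin d) ℝ) - c • (U * Matrix.diagonal lam * Uᴴ)) := by
      module
    rw [← h1, Stmt13Aux.conj_affine hU1]
    exact Stmt13Aux.diag_conj_congr _ _ (fun i => by simp only [hsfun]; try ring)
  have hIt : ∀ t : ℝ, (1 : Matrix (Fin d) (Fin d) ℝ) + t • X
      = U * Matrix.diagonal (fun i => 1 + t * lam i) * Uᴴ := by
    intro t
    rw [hXspec]
    have h := Stmt13Aux.conj_affine hU1 1 t lam
    rwa [one_smul] at h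
  -- q as a sum
  have hqt : ∀ t : ℝ, q t = ∑ i, ((1 + t * lam i) * sfun i) ^ 2 := by
    intro t
    rw [hq t, hIt t, hSspec, Stmt13Aux.conj_mul hU2, Stmt13Aux.conj_mul hU2,
      Stmt13Aux.conj_trace hU2]
    exact Finset.sum_congr rfl fun i _ => by ring
  -- sum identities
  have hsum_s1 : ∑ i, sfun i = 1 := by
    have h : ∀ i ∈ Finset.univ, sfun i = k - (k * c) * lam i := fun i _ => by
      simp only [hsfun]; try ring
    rw [Finset.sum_congr rfl h, Finset.sum_sub_distrib, ← Finset.mul_sum, Finset.sum_const,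
      Finset.card_univ, Fintype.card_fin, nsmul_eq_mul]
    linear_combination (-k) * idA + hk1
  have hsum_slam : ∑ i, sfun i * lam i = 0 := by
    have h : ∀ i ∈ Finset.univ, sfun i * lam i = k * lam i - (k * c) * lam i ^ 2 :=
      fun i _ => by simp only [hsfun]; try ring
    rw [Finset.sum_congr rfl h, Finset.sum_sub_distrib, ← Finset.mul_sum, ← Finset.mul_sum]
    linear_combination (-k) * idB
  have hsum_s2 : ∑ i, sfun i ^ 2 = k := by
    have h : ∀ i ∈ Finset.univ, sfun i ^ 2
        = k ^ 2 - (2 * k ^ 2 * c) * lam i + (k ^ 2) * (c ^ 2 * lam i ^ 2) :=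
      fun i _ => by simp only [hsfun]; try ring
    rw [Finset.sum_congr rfl h, Finset.sum_add_distrib, Finset.sum_sub_distrib,
      ← Finset.mul_sum, ← Finset.mul_sum, Finset.sum_const, Finset.card_univ,
      Fintype.card_fin, nsmul_eq_mul, ← Finset.mul_sum]
    linear_combination (-2 * k ^ 2) * idA + k ^ 2 * idC + k * hk1
  have hsum_s2lam : ∑ i, sfun i ^ 2 * lam i
      = k ^ 2 * (∑ i, lam i) - (2 * k ^ 2) * (c * ∑ i, lam i ^ 2)
        + k ^ 2 * (c ^ 2 * ∑ i, lam i ^ 3) := by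
    have h : ∀ i ∈ Finset.univ, sfun i ^ 2 * lam i
        = k ^ 2 * lam i - (2 * k ^ 2 * c) * lam i ^ 2 + (k ^ 2 * c ^ 2) * lam i ^ 3 :=
      fun i _ => by simp only [hsfun]; try ring
    rw [Finset.sum_congr rfl h, Finset.sum_add_distrib, Finset.sum_sub_distrib,
      ← Finset.mul_sum, ← Finset.mul_sum, ← Finset.mul_sum]
    ring
  have hL3 : ∑ i, lam i ^ 3 ≤ Real.sqrt (∑ i, lam i ^ 2) * ∑ i, lam i ^ 2 := by
    rw [Finset.mul_sum]
    apply Finset.sum_le_sum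
    intro i _
    have h1 := habs i
    have h2 := le_abs_self (lam i)
    nlinarith [sq_nonneg (lam i), abs_nonneg (lam i)]
  have idD : c ^ 2 * (∑ i, lam i ^ 3) ≤ α * (∑ i, lam i) := by
    calc c ^ 2 * (∑ i, lam i ^ 3)
        ≤ c ^ 2 * (Real.sqrt (∑ i, lam i ^ 2) * ∑ i, lam i ^ 2) :=
          mul_le_mul_of_nonneg_left hL3 (sq_nonneg c)
      _ = (c * Real.sqrt (∑ i, lam i ^ 2)) * (c * ∑ i, lam i ^ 2) := by ring
      _ = α * (∑ i, lam i) := by rw [hcsqrt, idB]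
  have hBneg : ∑ i, sfun i ^ 2 * lam i < 0 := by
    rw [hsum_s2lam, idB]
    have h2 : k ^ 2 * (c ^ 2 * ∑ i, lam i ^ 3) ≤ k ^ 2 * (α * ∑ i, lam i) :=
      mul_le_mul_of_nonneg_left idD (sq_nonneg k)
    have hk2 : 0 < k ^ 2 := by positivity
    have h4 : k ^ 2 * (α * ∑ i, lam i) < k ^ 2 * (1 * ∑ i, lam i) :=
      mul_lt_mul_of_pos_left (mul_lt_mul_of_pos_right hα1 hτpos) hk2
    linarith
  -- part (i)
  set A : ℝ := ∑ i, (sfun i * lam i) ^ 2 with hA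
  set B : ℝ := ∑ i, 2 * (sfun i ^ 2 * lam i) with hB
  clear_value A B
  have hqpoly : ∀ t : ℝ, q t = A * t ^ 2 + B * t + k := by
    intro t
    rw [hqt t]
    have h : ∀ i ∈ Finset.univ, ((1 + t * lam i) * sfun i) ^ 2
        = (sfun i * lam i) ^ 2 * t ^ 2 + (2 * (sfun i ^ 2 * lam i)) * t + sfun i ^ 2 :=
      fun i _ => by ring
    rw [Finset.sum_congr rfl h, Finset.sum_add_distrib, Finset.sum_add_distrib,
      ← Finset.sum_mul, ← Finset.sum_mul, hsum_s2, ← hA, ← hB]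
  have hApos : 0 < A := by
    obtain ⟨j, hj⟩ : ∃ j, lam j ≠ 0 := by
      by_contra h
      push_neg at h
      have : ∑ i, lam i ^ 2 = 0 := Finset.sum_eq_zero fun i _ => by rw [h i]; ring
      linarith
    have h1 : (sfun j * lam j) ^ 2 ≤ A := by
      rw [hA]
      exact Finset.single_le_sum (fun i (_ : i ∈ Finset.univ) => sq_nonneg (sfun i * lam i))
        (Finset.mem_univ j)
    have h2 : 0 < (sfun j * lam j) ^ 2 :=
      lt_of_le_of_ne (sq_nonneg _)
        (Ne.symm (pow_ne_zero 2 (mul_ne_zero (ne_of_gt (hs_pos j)) hj)))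
    linarith
  have hBneg2 : B < 0 := by
    rw [hB, ← Finset.mul_sum]
    linarith [hBneg]
  refine ⟨⟨⟨A, B, k, hApos, hqpoly⟩, ?_, ?_⟩, ?_⟩
  · rw [hqpoly 0, hk, one_div]
    ring
  · have hqfun : q = fun t => A * t ^ 2 + B * t + k := funext hqpoly
    have hder : HasDerivAt (fun t : ℝ => A * t ^ 2 + B * t + k)
        (A * (↑2 * (0:ℝ) ^ 1) + B * 1) 0 :=
      (((hasDerivAt_pow 2 (0:ℝ)).const_mul A).add
        ((hasDerivAt_id (0:ℝ)).const_mul B)).add_const k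
    have hd0 : deriv q 0 = A * (↑2 * (0:ℝ) ^ 1) + B * 1 := by
      rw [hqfun]
      exact hder.deriv
    rw [hd0]
    simpa using hBneg2
  -- part (ii)
  · intro t ht β hβ0 hβ1
    have h1pt : 0 < 1 + t := by linarith
    have h1pt' : (1 + t)⁻¹ > 0 := inv_pos.mpr h1pt
    have hβ2 : β ^ 2 < 1 := by
      have h := mul_lt_mul_of_pos_left hβ1 hβ0
      rw [mul_one] at h
      calc β ^ 2 = β * β := sq β
        _ < β := h
        _ < 1 := hβ1
    have hdβ : 0 < (d:ℝ) - β ^ 2 := by linarith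
    set μ : Fin d → ℝ := fun i => 1 + t * lam i with hμ
    set ε : Fin d → ℝ := fun i => (1 + t)⁻¹ + (1 + t)⁻¹ * t * lam i with hε
    clear_value μ ε
    have hεμ : ∀ i, ε i = (1 + t)⁻¹ * μ i := fun i => by simp only [hε, hμ]; ring
    have hEt : E t = U * Matrix.diagonal ε * Uᴴ := by
      rw [hE t, hXspec]
      have h2 := Stmt13Aux.conj_affine hU1 ((1 + t)⁻¹) ((1 + t)⁻¹ * t) lam
      have h3 : (1 + t)⁻¹ • ((1 : Matrix (Fin d) (Fin d) ℝ)
            + t • (U * Matrix.diagonal lam * Uᴴ))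
          = (1 + t)⁻¹ • (1 : Matrix (Fin d) (Fin d) ℝ)
            + ((1 + t)⁻¹ * t) • (U * Matrix.diagonal lam * Uᴴ) := by
        module
      rw [h3, h2, hε]
    set tv : Fin d → ℝ := fun i => sfun i * ε i with htv
    clear_value tv
    have hsum_smu : ∑ i, sfun i * μ i = 1 := by
      have h : ∀ i ∈ Finset.univ, sfun i * μ i = sfun i + (sfun i * lam i) * t :=
        fun i _ => by simp only [hμ]; ring
      rw [Finset.sum_congr rfl h, Finset.sum_add_distrib, ← Finset.sum_mul, hsum_s1, hsum_slam]
      ring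
    have hsum_tv : ∑ i, tv i = (1 + t)⁻¹ := by
      have h : ∀ i ∈ Finset.univ, tv i = (1 + t)⁻¹ * (sfun i * μ i) := fun i _ => by
        simp only [htv, hεμ i]; ring
      rw [Finset.sum_congr rfl h, ← Finset.mul_sum, hsum_smu, mul_one]
    have hsum_tv2 : ∑ i, tv i ^ 2 = (1 + t)⁻¹ ^ 2 * q t := by
      have h : ∀ i ∈ Finset.univ, tv i ^ 2 = (1 + t)⁻¹ ^ 2 * ((1 + t * lam i) * sfun i) ^ 2 :=
        fun i _ => by simp only [htv, hεμ i, hμ]; ring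
      rw [Finset.sum_congr rfl h, ← Finset.mul_sum, ← hqt t]
    have hqnn : 0 ≤ q t := by
      rw [hqt t]
      exact Finset.sum_nonneg fun i _ => sq_nonneg _
    constructor
    · rintro ⟨hpd, hdual⟩
      -- E t positive definite gives positive ε
      have hεpos : ∀ i, 0 < ε i := by
        rw [hEt] at hpd
        exact Matrix.posDef_diagonal_iff.mp
          ((Stmt13Aux.posdef_conj_iff hU1 hU2 (Matrix.diagonal ε)).mp hpd)
      by_contra hqlt
      push_neg at hqlt
      have hhyp : (∑ i, tv i) ^ 2 ≤ ((d:ℝ) - β ^ 2) * ∑ i, (tv i) ^ 2 := by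
        rw [hsum_tv, hsum_tv2]
        have h1 : 1 ≤ ((d:ℝ) - β ^ 2) * q t := by
          rw [div_le_iff₀ hdβ] at hqlt
          linarith
        have h2 : (0:ℝ) < (1 + t)⁻¹ ^ 2 := by positivity
        calc ((1 + t)⁻¹) ^ 2 = (1 + t)⁻¹ ^ 2 * 1 := by ring
          _ ≤ (1 + t)⁻¹ ^ 2 * (((d:ℝ) - β ^ 2) * q t) :=
            mul_le_mul_of_nonneg_left h1 h2.le
          _ = ((d:ℝ) - β ^ 2) * ((1 + t)⁻¹ ^ 2 * q t) := by ring
      have hTpos : 0 < ∑ i, tv i := by rw [hsum_tv]; exact h1pt'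
      obtain ⟨w, hw0, hwcone, hwneg⟩ := Stmt13Aux.vecDual_witness hd hβ0 hβ1 tv hTpos hhyp
      -- construct the violating matrix Z
      set Z : Matrix (Fin d) (Fin d) ℝ :=
        U * Matrix.diagonal (fun i => ε i * w i) * Uᴴ with hZ
      clear_value Z
      have hEinv : (E t)⁻¹ = U * Matrix.diagonal (fun i => (ε i)⁻¹) * Uᴴ := by
        apply Matrix.inv_eq_right_inv
        rw [hEt, Stmt13Aux.conj_mul hU2]
        have h : (fun i => ε i * (ε i)⁻¹) = fun _ : Fin d => (1:ℝ) := by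
          funext i
          exact mul_inv_cancel₀ (ne_of_gt (hεpos i))
        rw [h, Matrix.diagonal_one, Matrix.mul_one, hU1]
      have hEinvZ : (E t)⁻¹ * Z = U * Matrix.diagonal w * Uᴴ := by
        rw [hEinv, hZ, Stmt13Aux.conj_mul hU2]
        exact Stmt13Aux.diag_conj_congr _ _ (fun i => by
          rw [inv_mul_cancel_left₀ (ne_of_gt (hεpos i))])
      have hZcone : Z ∈ matQuadCone (E t) β := by
        constructor
        · rw [hZ]; exact Stmt13Aux.conj_diag_isSymm _
        · rw [hEinvZ, Stmt13Aux.conj_mul hU2, Stmt13Aux.conj_trace hU2,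
            Stmt13Aux.conj_trace hU2]
          have h : ∑ i, w i * w i = ∑ i, w i ^ 2 :=
            Finset.sum_congr rfl fun i _ => (sq (w i)).symm
          rw [h]
          exact hwcone
      have hZ0 : Z ≠ 0 := by
        intro h
        obtain ⟨j, hj⟩ := Function.ne_iff.mp hw0
        have h2 : Uᴴ * Z * U = Matrix.diagonal (fun i => ε i * w i) := by
          rw [hZ]
          calc Uᴴ * (U * Matrix.diagonal (fun i => ε i * w i) * Uᴴ) * U
              = (Uᴴ * U) * Matrix.diagonal (fun i => ε i * w i) * (Uᴴ * U) := by
                simp only [Matrix.mul_assoc]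
            _ = _ := by rw [hU2, Matrix.one_mul, Matrix.mul_one]
        rw [h, Matrix.mul_zero, Matrix.zero_mul] at h2
        have h3 : ε j * w j = 0 := by
          have h4 := congrFun (congrFun h2 j) j
          simpa [Matrix.diagonal_apply_eq, eq_comm] using h4
        rcases mul_eq_zero.mp h3 with h3 | h3
        · exact absurd h3 (ne_of_gt (hεpos j))
        · exact hj h3
      have hSZ : (S * Z).trace = ∑ i, tv i * w i := by
        rw [hSspec, hZ, Stmt13Aux.conj_mul hU2, Stmt13Aux.conj_trace hU2]
        exact Finset.sum_congr rfl fun i _ => by simp only [htv]; ring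
      have := hdual Z hZcone hZ0
      rw [hSZ] at this
      linarith
    · intro hqlt
      have hqt' : q t = ∑ i, (sfun i * μ i) ^ 2 := by
        rw [hqt t]
        exact Finset.sum_congr rfl fun i _ => by rw [hμ]; ring
      have hμpos : ∀ i, 0 < μ i := by
        intro j
        by_contra hμj
        push_neg at hμj
        have hd1 : (1:ℝ) ≤ (d:ℝ) - 1 := by linarith
        have herase : 1 ≤ ∑ i ∈ Finset.univ.erase j, sfun i * μ i := by
          have h := Finset.add_sum_erase Finset.univ (fun i => sfun i * μ i)
            (Finset.mem_univ j)
          have h2 : sfun j * μ j ≤ 0 := mul_nonpos_of_nonneg_of_nonpos (hs_pos j).le hμj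
          rw [← h] at hsum_smu
          linarith
        have hcs := sq_sum_le_card_mul_sum_sq
          (s := Finset.univ.erase j) (f := fun i => sfun i * μ i)
        have hcard : ((Finset.univ.erase j).card : ℝ) = (d:ℝ) - 1 := by
          rw [Finset.card_erase_of_mem (Finset.mem_univ j), Finset.card_univ,
            Fintype.card_fin]
          have : 1 ≤ d := by omega
          push_cast [Nat.cast_sub this]
          ring
        have hsub : ∑ i ∈ Finset.univ.erase j, (sfun i * μ i) ^ 2 ≤ q t := by
          rw [hqt']
          apply Finset.sum_le_sum_of_subset_of_nonneg (Finset.subset_univ _)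
          intro i _ _
          exact sq_nonneg _
        have hq1 : 1 ≤ ((d:ℝ) - 1) * q t := by
          have h1 : 1 ≤ (∑ i ∈ Finset.univ.erase j, sfun i * μ i) ^ 2 := by
            calc (1:ℝ) = 1 * 1 := by ring
              _ ≤ (∑ i ∈ Finset.univ.erase j, sfun i * μ i)
                  * (∑ i ∈ Finset.univ.erase j, sfun i * μ i) :=
                mul_le_mul herase herase (by norm_num) (le_trans (by norm_num) herase)
              _ = (∑ i ∈ Finset.univ.erase j, sfun i * μ i) ^ 2 := (sq _).symm
          have h2 : (∑ i ∈ Finset.univ.erase j, sfun i * μ i) ^ 2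
              ≤ ((d:ℝ) - 1) * q t := by
            calc (∑ i ∈ Finset.univ.erase j, sfun i * μ i) ^ 2
                ≤ ((Finset.univ.erase j).card : ℝ)
                  * ∑ i ∈ Finset.univ.erase j, (sfun i * μ i) ^ 2 := hcs
              _ ≤ ((d:ℝ) - 1) * q t := by
                  rw [hcard]
                  exact mul_le_mul_of_nonneg_left hsub (by linarith)
          linarith
        have hlt : ((d:ℝ) - β ^ 2) * q t < 1 := by
          rw [lt_div_iff₀ hdβ] at hqlt
          linarith
        have : ((d:ℝ) - 1) * q t ≤ ((d:ℝ) - β ^ 2) * q t :=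
          mul_le_mul_of_nonneg_right (by linarith) hqnn
        linarith
      have hεpos : ∀ i, 0 < ε i := by
        intro i
        rw [hεμ i]
        exact mul_pos h1pt' (hμpos i)
      have hpd : (E t).PosDef := by
        rw [hEt]
        exact (Stmt13Aux.posdef_conj_iff hU1 hU2 _).mpr (Matrix.posDef_diagonal_iff.mpr hεpos)
      refine ⟨hpd, ?_⟩
      intro Z hZmem hZ0
      obtain ⟨hZsym, hZineq⟩ := hZmem
      have hEinv : (E t)⁻¹ = U * Matrix.diagonal (fun i => (ε i)⁻¹) * Uᴴ := by
        apply Matrix.inv_eq_right_inv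
        rw [hEt, Stmt13Aux.conj_mul hU2]
        have h : (fun i => ε i * (ε i)⁻¹) = fun _ : Fin d => (1:ℝ) := by
          funext i
          exact mul_inv_cancel₀ (ne_of_gt (hεpos i))
        rw [h, Matrix.diagonal_one, Matrix.mul_one, hU1]
      set Z' : Matrix (Fin d) (Fin d) ℝ := Uᴴ * Z * U with hZ'
      clear_value Z'
      have hZsym' : ∀ i j, Z' j i = Z' i j := by
        have hZt : Zᴴ = Z := by
          rw [Matrix.conjTranspose_eq_transpose_of_trivial]
          exact hZsym
        have h : Z'ᴴ = Z' := by
          rw [hZ', Matrix.conjTranspose_mul, Matrix.conjTranspose_mul,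
            Matrix.conjTranspose_conjTranspose, hZt, Matrix.mul_assoc]
        intro i j
        have h2 := congrFun (congrFun h i) j
        rw [Matrix.conjTranspose_apply] at h2
        simpa using h2
      have hWeq : (E t)⁻¹ * Z
          = U * (Matrix.diagonal (fun i => (ε i)⁻¹) * Z') * Uᴴ := by
        rw [hEinv, Stmt13Aux.sandwich_mul hU1, hZ']
      have htr1 : ((E t)⁻¹ * Z).trace = ∑ i, (ε i)⁻¹ * Z' i i := by
        rw [hWeq, Stmt13Aux.conj_traceM hU2, Stmt13Aux.trace_diag_mul]
      have htr2 : ((E t)⁻¹ * Z * ((E t)⁻¹ * Z)).trace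
          = ∑ i, ∑ j, (ε i)⁻¹ * Z' i j * ((ε j)⁻¹ * Z' j i) := by
        rw [hWeq, Stmt13Aux.conj_mulM hU2, Stmt13Aux.conj_traceM hU2,
          Stmt13Aux.trace_diag_mul_diag_mul]
      set w : Fin d → ℝ := fun i => (ε i)⁻¹ * Z' i i with hw
      clear_value w
      have hQ2term : ∀ i j, (ε i)⁻¹ * Z' i j * ((ε j)⁻¹ * Z' j i)
          = ((ε i)⁻¹ * (ε j)⁻¹) * Z' i j ^ 2 := by
        intro i j
        rw [hZsym' i j]
        ring
      have hQ2nn : 0 ≤ ∑ i, ∑ j, (ε i)⁻¹ * Z' i j * ((ε j)⁻¹ * Z' j i) := by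
        apply Finset.sum_nonneg
        intro i _
        apply Finset.sum_nonneg
        intro j _
        show 0 ≤ (ε i)⁻¹ * Z' i j * ((ε j)⁻¹ * Z' j i)
        rw [hQ2term i j]
        have : 0 < (ε i)⁻¹ * (ε j)⁻¹ :=
          mul_pos (inv_pos.mpr (hεpos i)) (inv_pos.mpr (hεpos j))
        positivity
      have hdiag_le : ∑ i, w i ^ 2
          ≤ ∑ i, ∑ j, (ε i)⁻¹ * Z' i j * ((ε j)⁻¹ * Z' j i) := by
        apply Finset.sum_le_sum
        intro i _
        have h1 : (ε i)⁻¹ * Z' i i * ((ε i)⁻¹ * Z' i i)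
            ≤ ∑ j, (ε i)⁻¹ * Z' i j * ((ε j)⁻¹ * Z' j i) := by
          apply Finset.single_le_sum (f := fun j => (ε i)⁻¹ * Z' i j * ((ε j)⁻¹ * Z' j i))
            _ (Finset.mem_univ i)
          intro j _
          show 0 ≤ (ε i)⁻¹ * Z' i j * ((ε j)⁻¹ * Z' j i)
          rw [hQ2term i j]
          have : 0 < (ε i)⁻¹ * (ε j)⁻¹ :=
            mul_pos (inv_pos.mpr (hεpos i)) (inv_pos.mpr (hεpos j))
          positivity
        calc w i ^ 2 = (ε i)⁻¹ * Z' i i * ((ε i)⁻¹ * Z' i i) := by rw [hw]; ring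
          _ ≤ _ := h1
      have hwcone : β * Real.sqrt (∑ i, w i ^ 2) ≤ ∑ i, w i := by
        calc β * Real.sqrt (∑ i, w i ^ 2)
            ≤ β * Real.sqrt (∑ i, ∑ j, (ε i)⁻¹ * Z' i j * ((ε j)⁻¹ * Z' j i)) := by
              exact mul_le_mul_of_nonneg_left (Real.sqrt_le_sqrt hdiag_le) hβ0.le
          _ ≤ ∑ i, w i := by rw [← htr1, ← htr2]; exact hZineq
      have hw0 : w ≠ 0 := by
        intro h
        have hsum0 : ∑ i, w i = 0 := by rw [h]; simp
        have h1 : β * Real.sqrt (∑ i, ∑ j, (ε i)⁻¹ * Z' i j * ((ε j)⁻¹ * Z' j i)) ≤ 0 := by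
          have h5 := hZineq
          rw [htr2, htr1] at h5
          exact le_trans h5 (le_of_eq hsum0)
        have h2 : Real.sqrt (∑ i, ∑ j, (ε i)⁻¹ * Z' i j * ((ε j)⁻¹ * Z' j i)) ≤ 0 := by
          rcases le_or_gt (Real.sqrt (∑ i, ∑ j, (ε i)⁻¹ * Z' i j * ((ε j)⁻¹ * Z' j i))) 0
            with h | h
          · exact h
          · exact absurd h1 (not_le.mpr (mul_pos hβ0 h))
        have h3 : ∑ i, ∑ j, (ε i)⁻¹ * Z' i j * ((ε j)⁻¹ * Z' j i) = 0 := by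
          have h4 := Real.sqrt_eq_zero'.mp (le_antisymm h2 (Real.sqrt_nonneg _))
          exact le_antisymm h4 hQ2nn
        have hZ'0 : Z' = 0 := by
          ext i j
          have h5 : ∀ i ∈ Finset.univ,
              ∑ j, (ε i)⁻¹ * Z' i j * ((ε j)⁻¹ * Z' j i) = 0 := by
            intro i _
            have := (Finset.sum_eq_zero_iff_of_nonneg ?_).mp h3 i (Finset.mem_univ i)
            · exact this
            · intro i _
              apply Finset.sum_nonneg
              intro j _
              show 0 ≤ (ε i)⁻¹ * Z' i j * ((ε j)⁻¹ * Z' j i)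
              rw [hQ2term i j]
              have : 0 < (ε i)⁻¹ * (ε j)⁻¹ :=
                mul_pos (inv_pos.mpr (hεpos i)) (inv_pos.mpr (hεpos j))
              positivity
          have h6 := (Finset.sum_eq_zero_iff_of_nonneg ?_).mp (h5 i (Finset.mem_univ i)) j
            (Finset.mem_univ j)
          · rw [hQ2term i j] at h6
            have hεij : (ε i)⁻¹ * (ε j)⁻¹ ≠ 0 :=
              ne_of_gt (mul_pos (inv_pos.mpr (hεpos i)) (inv_pos.mpr (hεpos j)))
            have h7 := (mul_eq_zero.mp h6).resolve_left hεij
            have h8 := (pow_eq_zero_iff two_ne_zero).mp h7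
            simpa using h8
          · intro j _
            show 0 ≤ (ε i)⁻¹ * Z' i j * ((ε j)⁻¹ * Z' j i)
            rw [hQ2term i j]
            have : 0 < (ε i)⁻¹ * (ε j)⁻¹ :=
              mul_pos (inv_pos.mpr (hεpos i)) (inv_pos.mpr (hεpos j))
            positivity
        apply hZ0
        have := Stmt13Aux.sandwich_self hU1 Z
        rw [← hZ'] at this
        rw [← this, hZ'0, Matrix.mul_zero, Matrix.zero_mul]
      have hTpos : 0 < ∑ i, tv i := by rw [hsum_tv]; exact h1pt'
      have hPlt : ((d:ℝ) - β ^ 2) * (∑ i, tv i ^ 2) < (∑ i, tv i) ^ 2 := by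
        rw [hsum_tv, hsum_tv2]
        have h1 : ((d:ℝ) - β ^ 2) * q t < 1 := by
          rw [lt_div_iff₀ hdβ] at hqlt
          linarith
        have h2 : (0:ℝ) < (1 + t)⁻¹ ^ 2 := by positivity
        calc ((d:ℝ) - β ^ 2) * ((1 + t)⁻¹ ^ 2 * q t)
            = (1 + t)⁻¹ ^ 2 * (((d:ℝ) - β ^ 2) * q t) := by ring
          _ < (1 + t)⁻¹ ^ 2 * 1 := mul_lt_mul_of_pos_left h1 h2
          _ = ((1 + t)⁻¹) ^ 2 := by ring
      have hpos := Stmt13Aux.vecDual_pos hd hβ0 hβ1 tv w hTpos hPlt hw0 hwcone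
      have hSZ : (S * Z).trace = ∑ i, tv i * w i := by
        have hSZeq : S * Z = U * (Matrix.diagonal sfun * Z') * Uᴴ := by
          rw [hSspec, Stmt13Aux.sandwich_mul hU1, hZ']
        rw [hSZeq, Stmt13Aux.conj_traceM hU2, Stmt13Aux.trace_diag_mul]
        apply Finset.sum_congr rfl
        intro i _
        simp only [htv, hw]
        rw [show sfun i * ε i * ((ε i)⁻¹ * Z' i i) = (ε i * (ε i)⁻¹) * (sfun i * Z' i i)
          from by ring, mul_inv_cancel₀ (ne_of_gt (hεpos i)), one_mul]
      rw [hSZ]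
      exact hpos
end

section
/- Let d be a positive integer, κ ∈ (0,1), and δ ∈ (0,1). Let (gap_i)_{i≥0} be a sequence of positive reals with gap_0 ≤ 1, gap_{i+1} ≤ gap_i for every i ≥ 0, and such that for every i ≥ 0, gap_{i+1}/gap_i ≤ 1 − κ/(κ+√d) or gap_{i+2}/gap_{i+1} ≤ 1 − κ/(κ+√d). Then for every integer t ≥ 2 + (2(κ+√d)/κ)·ln(1/δ), one has gap_t ≤ δ. In particular, the duality gap drops below δ after O(√d · log(1/δ)) iterations. -/
open scoped BigOperators

/-- iteration count of the affine-scaling IPM, Lemma `iterations`.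
If the duality gaps `gap_i` are positive, nonincreasing, start at most `1`, and among any two
consecutive steps at least one contracts the gap by a factor at most `1 - κ/(κ+√d)`, then
`gap_t ≤ δ` for every `t ≥ 2 + (2(κ+√d)/κ) ln(1/δ)`. -/
theorem stmt16 (d : ℕ) (hd : 1 ≤ d) (κ δ : ℝ)
    (hκ0 : 0 < κ) (hκ1 : κ < 1) (hδ0 : 0 < δ) (hδ1 : δ < 1)
    (gap : ℕ → ℝ) (hpos : ∀ i, 0 < gap i) (h0 : gap 0 ≤ 1)
    (hmono : ∀ i, gap (i + 1) ≤ gap i)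
    (hcontr : ∀ i, gap (i + 1) / gap i ≤ 1 - κ / (κ + Real.sqrt d) ∨
      gap (i + 2) / gap (i + 1) ≤ 1 - κ / (κ + Real.sqrt d)) :
    ∀ t : ℕ, 2 + 2 * (κ + Real.sqrt d) / κ * Real.log (1 / δ) ≤ (t : ℝ) → gap t ≤ δ := by
  intro t ht
  set q := Real.sqrt d with hq
  have hq1 : (1:ℝ) ≤ q := by
    rw [hq]
    have h1 : (1:ℝ) ≤ (d:ℝ) := by exact_mod_cast hd
    calc (1:ℝ) = Real.sqrt 1 := Real.sqrt_one.symm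
      _ ≤ Real.sqrt d := Real.sqrt_le_sqrt h1
  have hden : 0 < κ + q := by linarith
  set s := κ / (κ + q) with hs
  have hs0 : 0 < s := div_pos hκ0 hden
  have hs1 : s < 1 := by rw [hs, div_lt_one hden]; linarith
  have hsk : s * (κ + q) = κ := by
    rw [hs]; field_simp
  set r := 1 - s with hr
  have hr0 : 0 ≤ r := by simp only [hr]; linarith
  have step : ∀ i, gap (i + 2) ≤ r * gap i := by
    intro i
    rcases hcontr i with h | h
    · have h1 : gap (i+1) ≤ r * gap i := by
        have := (div_le_iff₀ (hpos i)).mp h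
        calc gap (i+1) ≤ (1 - κ / (κ + q)) * gap i := this
          _ = r * gap i := by rw [hr, hs]
      calc gap (i+2) ≤ gap (i+1) := hmono (i+1)
        _ ≤ r * gap i := h1
    · have h1 : gap (i+2) ≤ r * gap (i+1) := by
        have := (div_le_iff₀ (hpos (i+1))).mp h
        calc gap (i+2) ≤ (1 - κ / (κ + q)) * gap (i+1) := this
          _ = r * gap (i+1) := by rw [hr, hs]
      calc gap (i+2) ≤ r * gap (i+1) := h1
        _ ≤ r * gap i := mul_le_mul_of_nonneg_left (hmono i) hr0
  have hpow : ∀ k, gap (2 * k) ≤ r ^ k := by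
    intro k
    induction k with
    | zero => simpa using h0
    | succ n ih =>
      have h2 : 2 * (n+1) = 2*n + 2 := by ring
      rw [h2, pow_succ]
      calc gap (2*n+2) ≤ r * gap (2*n) := step _
        _ ≤ r * r^n := mul_le_mul_of_nonneg_left ih hr0
        _ = r^n * r := mul_comm _ _
  have hanti : Antitone gap := antitone_nat_of_succ_le hmono
  set k := t / 2 with hk
  have h2k : 2 * k ≤ t := by
    rw [hk, mul_comm]; exact Nat.div_mul_le_self t 2
  have htk : t ≤ 2 * k + 1 := by
    omega
  have hgk : gap t ≤ r ^ k := (hanti h2k).trans (hpow k)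
  -- Now show r ^ k ≤ δ
  set L := Real.log (1 / δ) with hL
  have hL0 : 0 < L := by
    rw [hL]
    apply Real.log_pos
    rw [lt_div_iff₀ hδ0]; linarith
  have htkR : (t : ℝ) ≤ 2 * (k : ℝ) + 1 := by exact_mod_cast htk
  have hkL : L ≤ s * k := by
    -- from ht : 2 + 2*(κ+q)/κ * L ≤ t ≤ 2k+1
    have h1 : 2 + 2 * (κ + q) / κ * L ≤ 2 * (k:ℝ) + 1 := le_trans ht htkR
    have he : 2 * (κ + q) / κ * L = 2 * ((κ + q) / κ * L) := by ring
    have h2 : (κ + q) / κ * L ≤ (k:ℝ) - 1/2 := by linarith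
    have h3 : s * ((κ + q) / κ * L) ≤ s * ((k:ℝ) - 1/2) :=
      mul_le_mul_of_nonneg_left h2 hs0.le
    have h4 : s * ((κ + q) / κ * L) = L := by
      field_simp [hs]; linarith [hsk]
    nlinarith
  have hrexp : r ≤ Real.exp (-s) := by
    have := Real.add_one_le_exp (-s)
    simp only [hr]; linarith
  have h5 : r ^ k ≤ Real.exp (-s) ^ k := pow_le_pow_left₀ hr0 hrexp k
  have h6 : Real.exp (-s) ^ k = Real.exp (-(s * k)) := by
    rw [← Real.exp_nat_mul]; ring_nf
  have h7 : Real.exp (-(s * k)) ≤ δ := by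
    have hlogδ : Real.log δ = -L := by
      rw [hL, one_div, Real.log_inv]; ring
    have : -(s * k) ≤ Real.log δ := by rw [hlogδ]; linarith
    calc Real.exp (-(s*k)) ≤ Real.exp (Real.log δ) := Real.exp_le_exp.mpr this
      _ = δ := Real.exp_log hδ0
  calc gap t ≤ r ^ k := hgk
    _ ≤ Real.exp (-s) ^ k := h5
    _ = Real.exp (-(s * k)) := h6
    _ ≤ δ := h7
end
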